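/- arXiv:1806.02680 — 6 statements merged into one kernel-verified Lean document; each statement's English description precedes it below -/
import Mathlib

section
/- A preference vector (p_1,...,p_n) with 1 ≤ p_i ≤ n allows all n cars to park (each car i drives to space p_i and takes the first unoccupied space with index ≥ p_i, and all cars succeed) if and only if its weakly increasing sorted version (p_{(1)},...,p_{(n)}) satisfies p_{(i)} ≤ i for all 1 ≤ i ≤ n. -/
/-- The weakly increasing sorted version of a vector of naturals. -/
def sortPF {n : ℕ} (p : Fin n → ℕ) : List ℕ :=
  Multiset.sort (↑(List.ofFn p)) (· ≤ ·)

/-- `p` is an `a`-parking function of length `n`: all entries are positive and the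
`i`-th entry (0-based) of the sorted version is at most `a + i` (i.e. `a + i - 1` 1-based). -/
def IsAPF (a : ℕ) {n : ℕ} (p : Fin n → ℕ) : Prop :=
  (∀ i, 1 ≤ p i) ∧ ∀ i : Fin n, (sortPF p).getD i 0 ≤ a + (i : ℕ)

/-- `p` is an ordinary parking function of length `n`. -/
def IsPF {n : ℕ} (p : Fin n → ℕ) : Prop :=
  (∀ i, 1 ≤ p i ∧ p i ≤ n) ∧ ∀ i : Fin n, (sortPF p).getD i 0 ≤ (i : ℕ) + 1

/-- The first unoccupied space `s` with `pref ≤ s ≤ n`, if any. -/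
def firstFree (n : ℕ) (occ : Finset ℕ) (pref : ℕ) : Option ℕ :=
  ((List.range' pref (n + 1 - pref)).filter (fun s => decide (s ∉ occ))).head?

/-- Process the cars in order; each parks at the first free space `≥` its preference.
Returns `true` iff every car parks successfully. -/
def parkAll (n : ℕ) : List ℕ → Finset ℕ → Bool
  | [], _ => true
  | pref :: rest, occ =>
    match firstFree n occ pref with
    | none => false
    | some s => parkAll n rest (insert s occ)

lemma ffAux (occ : Finset ℕ) : ∀ (k q s : ℕ),
    ((List.range' q k).filter (fun s => decide (s ∉ occ))).head? = some s →
    q ≤ s ∧ s < q + k ∧ s ∉ occ ∧ ∀ x, q ≤ x → x < s → x ∈ occ := by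
  intro k
  induction k with
  | zero => intro q s h; simp [List.range'] at h
  | succ k ih =>
    intro q s h
    rw [List.range'_succ] at h
    by_cases hq : q ∈ occ
    · rw [List.filter_cons_of_neg (by simpa using hq)] at h
      obtain ⟨h1, h2, h3, h4⟩ := ih (q+1) s h
      refine ⟨by omega, by omega, h3, ?_⟩
      intro x hx1 hx2
      rcases Nat.eq_or_lt_of_le hx1 with h | h
      · exact h ▸ hq
      · exact h4 x h hx2
    · rw [List.filter_cons_of_pos (by simpa using hq)] at h
      simp only [List.head?_cons, Option.some.injEq] at h
      subst h
      exact ⟨le_refl _, by omega, hq, fun x hx1 hx2 => absurd hx2 (by omega)⟩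

lemma ffSome {n : ℕ} {occ : Finset ℕ} {q s : ℕ} (h : firstFree n occ q = some s) :
    q ≤ s ∧ s ≤ n ∧ s ∉ occ ∧ ∀ x, q ≤ x → x < s → x ∈ occ := by
  obtain ⟨h1, h2, h3, h4⟩ := ffAux occ (n + 1 - q) q s h
  exact ⟨h1, by omega, h3, h4⟩

lemma ffNone {n : ℕ} {occ : Finset ℕ} {q : ℕ} (h : firstFree n occ q = none) :
    ∀ s, q ≤ s → s ≤ n → s ∈ occ := by
  unfold firstFree at h
  rw [List.head?_eq_none_iff, List.filter_eq_nil_iff] at h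
  intro s h1 h2
  have := h s (by rw [List.mem_range'_1]; omega)
  simpa using this

def F (n : ℕ) (occ : Finset ℕ) (t : ℕ) : ℕ := ((Finset.Icc t n) \ occ).card

def cnt (l : List ℕ) (t : ℕ) : ℕ := l.countP (fun x => decide (t ≤ x))

lemma parkAll_iff (n : ℕ) : ∀ (l : List ℕ) (occ : Finset ℕ),
    parkAll n l occ = true ↔ ∀ t, cnt l t ≤ F n occ t := by
  intro l
  induction l with
  | nil => intro occ; simp [parkAll, cnt]
  | cons q rest ih =>
    intro occ
    rw [parkAll]
    cases h : firstFree n occ q with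
    | none =>
      simp only [Bool.false_eq_true, false_iff, not_forall]
      refine ⟨q, ?_⟩
      have h0 : F n occ q = 0 := by
        rw [F, Finset.card_eq_zero, Finset.sdiff_eq_empty_iff_subset]
        intro x hx
        rw [Finset.mem_Icc] at hx
        exact ffNone h x hx.1 hx.2
      have h1 : 1 ≤ cnt (q :: rest) q := by
        rw [cnt, List.countP_cons]
        simp
      omega
    | some s =>
      obtain ⟨hqs, hsn, hso, hmin⟩ := ffSome h
      rw [ih]
      have hcnt : ∀ t, cnt (q :: rest) t =
          cnt rest t + if t ≤ q then 1 else 0 := by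
        intro t
        rw [cnt, cnt, List.countP_cons]
        by_cases htq : t ≤ q <;> simp [htq]
      constructor
      · -- Inv(insert s occ, rest) → Inv(occ, q::rest)
        intro hInv t
        rw [hcnt]
        by_cases hts : t ≤ s
        · have hmem : s ∈ Finset.Icc t n \ occ := by
            rw [Finset.mem_sdiff, Finset.mem_Icc]; exact ⟨⟨hts, hsn⟩, hso⟩
          have hF : F n occ t = F n (insert s occ) t + 1 := by
            rw [F, F, Finset.sdiff_insert, Finset.card_erase_of_mem hmem]
            have : 0 < (Finset.Icc t n \ occ).card := Finset.card_pos.2 ⟨s, hmem⟩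
            omega
          by_cases htq : t ≤ q
          · have := hInv t; simp [htq]; omega
          · simp only [htq, if_false]
            -- q < t ≤ s : F n occ t = F n occ q
            have hFeq : F n occ t = F n occ q := by
              rw [F, F]
              congr 1
              apply Finset.ext
              intro x
              simp only [Finset.mem_sdiff, Finset.mem_Icc]
              constructor
              · rintro ⟨⟨hx1, hx2⟩, hx3⟩; exact ⟨⟨by omega, hx2⟩, hx3⟩
              · rintro ⟨⟨hx1, hx2⟩, hx3⟩
                refine ⟨⟨?_, hx2⟩, hx3⟩
                by_contra hc
                exact hx3 (hmin x hx1 (by omega))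
            have h2 : cnt rest t ≤ cnt rest q := by
              rw [cnt, cnt]
              apply List.countP_mono_left  -- maybe wrong name
              intro x hx hdx
              simp only [decide_eq_true_eq] at *
              omega
            have h3 := hInv q
            have h4 := hInv t
            omega
        · -- s < t : F unchanged
          have hF : F n (insert s occ) t = F n occ t := by
            rw [F, F, Finset.sdiff_insert, Finset.erase_eq_of_notMem]
            simp only [Finset.mem_sdiff, Finset.mem_Icc]
            push_neg
            intro h'; omega
          have := hInv t
          by_cases htq : t ≤ q <;> simp [htq] <;> omega
      · -- Inv(occ, q::rest) → Inv(insert s occ, rest)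
        intro hInv t
        by_cases hts : t ≤ s
        · have hmem : s ∈ Finset.Icc t n \ occ := by
            rw [Finset.mem_sdiff, Finset.mem_Icc]; exact ⟨⟨hts, hsn⟩, hso⟩
          have hF : F n occ t = F n (insert s occ) t + 1 := by
            rw [F, F, Finset.sdiff_insert, Finset.card_erase_of_mem hmem]
            have : 0 < (Finset.Icc t n \ occ).card := Finset.card_pos.2 ⟨s, hmem⟩
            omega
          by_cases htq : t ≤ q
          · have := hInv t; rw [hcnt] at this; simp [htq] at this; omega
          · -- q < t ≤ s
            have hFeq : F n occ t = F n occ q := by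
              rw [F, F]
              congr 1
              apply Finset.ext
              intro x
              simp only [Finset.mem_sdiff, Finset.mem_Icc]
              constructor
              · rintro ⟨⟨hx1, hx2⟩, hx3⟩; exact ⟨⟨by omega, hx2⟩, hx3⟩
              · rintro ⟨⟨hx1, hx2⟩, hx3⟩
                refine ⟨⟨?_, hx2⟩, hx3⟩
                by_contra hc
                exact hx3 (hmin x hx1 (by omega))
            have h2 : cnt rest t ≤ cnt rest q := by
              rw [cnt, cnt]
              apply List.countP_mono_left
              intro x hx hdx
              simp only [decide_eq_true_eq] at *
              omega
            have h3 := hInv q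
            have h5 : cnt (q :: rest) q = cnt rest q + 1 := by rw [hcnt]; simp
            omega
        · have hF : F n (insert s occ) t = F n occ t := by
            rw [F, F, Finset.sdiff_insert, Finset.erase_eq_of_notMem]
            simp only [Finset.mem_sdiff, Finset.mem_Icc]
            push_neg
            intro h'; omega
          have := hInv t
          rw [hcnt] at this
          omega

lemma sortPF_perm {n : ℕ} (p : Fin n → ℕ) : (sortPF p).Perm (List.ofFn p) :=
  Multiset.coe_eq_coe.mp (Multiset.sort_eq _ _)

lemma sortPF_length {n : ℕ} (p : Fin n → ℕ) : (sortPF p).length = n := by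
  rw [(sortPF_perm p).length_eq, List.length_ofFn]

lemma sortPF_sorted {n : ℕ} (p : Fin n → ℕ) : (sortPF p).Pairwise (· ≤ ·) :=
  Multiset.pairwise_sort _ _

lemma count_iff_sorted (n : ℕ) (p : Fin n → ℕ) (hp : ∀ i, 1 ≤ p i ∧ p i ≤ n) :
    (∀ t, cnt (List.ofFn p) t ≤ n + 1 - t) ↔
      ∀ i : Fin n, (sortPF p).getD i 0 ≤ (i : ℕ) + 1 := by
  have hlen : (sortPF p).length = n := sortPF_length p
  have hpair := List.pairwise_iff_getElem.mp (sortPF_sorted p)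
  have hcnt : ∀ t, cnt (List.ofFn p) t = (sortPF p).countP (fun x => decide (t ≤ x)) :=
    fun t => ((sortPF_perm p).countP_eq _).symm
  constructor
  · -- count condition → sorted condition
    intro hc i
    have hi : (i : ℕ) < (sortPF p).length := by rw [hlen]; exact i.isLt
    rw [List.getD_eq_getElem (sortPF p) 0 hi]
    by_contra hcon
    push_neg at hcon
    have key : n - i ≤ (sortPF p).countP (fun x => decide ((i : ℕ) + 2 ≤ x)) := by
      have hsub := (List.drop_sublist (i : ℕ) (sortPF p)).countP_le
        (p := fun x => decide ((i : ℕ) + 2 ≤ x))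
      have hall : ((sortPF p).drop i).countP (fun x => decide ((i : ℕ) + 2 ≤ x)) =
          ((sortPF p).drop i).length := by
        rw [List.countP_eq_length]
        intro x hx
        obtain ⟨j, hj, hxe⟩ := List.mem_iff_getElem.mp hx
        rw [List.length_drop] at hj
        rw [List.getElem_drop] at hxe
        have hij : (i : ℕ) + j < (sortPF p).length := by omega
        have hle : (sortPF p)[(i : ℕ)] ≤ (sortPF p)[(i : ℕ) + j] := by
          rcases Nat.eq_zero_or_pos j with h | h
          · subst h; simp
          · exact hpair _ _ hi hij (by omega)
        simp only [decide_eq_true_eq]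
        omega
      rw [List.length_drop, hlen] at hall
      omega
    have := hc ((i : ℕ) + 2)
    rw [hcnt] at this
    have hin : (i : ℕ) < n := i.isLt
    omega
  · -- sorted condition → count condition
    intro hsc t
    rw [hcnt]
    rcases Nat.lt_or_ge t 2 with ht | ht
    · have := List.countP_le_length (l := sortPF p) (p := fun x => decide (t ≤ x))
      omega
    rcases Nat.lt_or_ge n t with htn | htn
    · have hz : (sortPF p).countP (fun x => decide (t ≤ x)) = 0 := by
        rw [List.countP_eq_zero]
        intro x hx
        have hx' : x ∈ List.ofFn p := (sortPF_perm p).mem_iff.mp hx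
        obtain ⟨i, rfl⟩ := (List.mem_ofFn (f := p) (a := x)).mp hx'
        simp only [decide_eq_true_eq]
        have := (hp i).2
        omega
      omega
    · set P : ℕ → Bool := fun x => decide (t ≤ x) with hP
      have hsum := List.length_eq_countP_add_countP P (l := sortPF p)
      have hneg : t - 1 ≤ (sortPF p).countP (fun a => decide ¬ P a = true) := by
        have hsub := (List.take_sublist (t-1) (sortPF p)).countP_le
          (p := fun a => decide ¬ P a = true)
        have hall : ((sortPF p).take (t-1)).countP (fun a => decide ¬ P a = true) =
            ((sortPF p).take (t-1)).length := by
          rw [List.countP_eq_length]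
          intro x hx
          obtain ⟨j, hj, hxe⟩ := List.mem_iff_getElem.mp hx
          rw [List.getElem_take] at hxe
          have hjlt : j < t - 1 := by
            rw [List.length_take, hlen] at hj; omega
          have ht2 : (t - 2 : ℕ) < n := by omega
          have hgd := hsc ⟨t - 2, ht2⟩
          rw [List.getD_eq_getElem (sortPF p) 0 (by omega)] at hgd
          simp only at hgd
          have hjle : (sortPF p)[j]'(by omega) ≤ (sortPF p)[t-2]'(by omega) := by
            rcases Nat.lt_or_ge j (t-2) with h | h
            · exact hpair j (t-2) (by omega) (by omega) h
            · have hje : j = t - 2 := by omega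
              subst hje
              exact le_refl _
          rw [hP]
          simp only [decide_eq_true_eq, decide_not, Bool.not_eq_true',
            decide_eq_false_iff_not, not_le]
          omega
        have hlt : ((sortPF p).take (t-1)).length = t - 1 := by
          rw [List.length_take, hlen]; omega
        omega
      omega


/-- A preference vector `(p 1, …, p n)` with `1 ≤ p i ≤ n` lets all cars park iff its
weakly increasing sorted version satisfies `p₍ᵢ₎ ≤ i` for all `1 ≤ i ≤ n`. -/
theorem parking_succeeds_iff_sorted_le (n : ℕ) (p : Fin n → ℕ)
    (hp : ∀ i, 1 ≤ p i ∧ p i ≤ n) :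
    parkAll n (List.ofFn p) ∅ = true ↔
      ∀ i : Fin n, (sortPF p).getD i 0 ≤ (i : ℕ) + 1 := by
  rw [parkAll_iff]
  have hF : ∀ t, F n ∅ t = n + 1 - t := by
    intro t; rw [F, Finset.sdiff_empty, Nat.card_Icc]
  simp only [hF]
  exact count_iff_sorted n p hp
end

section
/- Let p(n,a) denote the number of a-parking functions of length n. Then p(n,a) = Σ_{k=0}^{n} C(n,k) · p(n-k, a+k-1), with boundary conditions p(n,0)=0 for n ≥ 1 and p(0,a)=1 for a ≥ 0. -/
/-- The number of `a`-parking functions of length `n`. -/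
noncomputable def pNum (n a : ℕ) : ℕ := Nat.card {p : Fin n → ℕ // IsAPF a p}

namespace PFaux

lemma length_sortPF {n : ℕ} (p : Fin n → ℕ) : (sortPF p).length = n := by simp [sortPF]

lemma mem_sortPF {n : ℕ} (p : Fin n → ℕ) (x : ℕ) : x ∈ sortPF p ↔ ∃ i, p i = x := by
  simp [sortPF, List.mem_ofFn]

lemma coe_ofFn {n : ℕ} (p : Fin n → ℕ) :
    (↑(List.ofFn p) : Multiset ℕ) = Multiset.map p Finset.univ.val := by
  simp [List.ofFn_eq_map]

lemma getD_sortPF {n : ℕ} (p : Fin n → ℕ) (j : ℕ) (hj : j < n) :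
    (sortPF p).getD j 0 = (sortPF p)[j]'(by rw [length_sortPF]; exact hj) :=
  List.getD_eq_getElem _ _ _

lemma bound {a n : ℕ} {p : Fin n → ℕ} (hp : IsAPF a p) (i : Fin n) : p i ≤ a + n := by
  have hm : p i ∈ sortPF p := (mem_sortPF p _).mpr ⟨i, rfl⟩
  obtain ⟨j, hjl, hj⟩ := List.mem_iff_getElem.mp hm
  have hjn : j < n := by rwa [length_sortPF] at hjl
  have h2 := hp.2 ⟨j, hjn⟩
  rw [getD_sortPF p j hjn] at h2
  simp only [hj] at h2
  omega

instance finiteAPF {a n : ℕ} : Finite {p : Fin n → ℕ // IsAPF a p} := by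
  apply Finite.of_injective
    (fun x : {p : Fin n → ℕ // IsAPF a p} =>
      (fun i => (⟨x.1 i, Nat.lt_succ_of_le (bound x.2 i)⟩ : Fin (a + n + 1))))
  intro x y hxy
  ext i
  exact congrArg Fin.val (congrFun hxy i)

variable {n : ℕ}

/-- positions with entry 1 -/
def ones (p : Fin n → ℕ) : Finset (Fin n) := Finset.univ.filter (fun i => p i = 1)

lemma mem_ones {p : Fin n → ℕ} {i : Fin n} : i ∈ ones p ↔ p i = 1 := by simp [ones]

/-- equivalence between the complement of `s` and `Fin (n - s.card)` -/
noncomputable def E (s : Finset (Fin n)) : {x // x ∈ sᶜ} ≃ Fin (n - s.card) :=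
  (sᶜ.equivFin).trans (finCongr (by simp [Finset.card_compl]))

/-- reconstruct a vector from the set of ones and the rest -/
noncomputable def build (s : Finset (Fin n)) (q : Fin (n - s.card) → ℕ) : Fin n → ℕ :=
  fun i => if h : i ∈ sᶜ then q (E s ⟨i, h⟩) + 1 else 1

noncomputable def strip (s : Finset (Fin n)) (p : Fin n → ℕ) : Fin (n - s.card) → ℕ :=
  fun j => p ((E s).symm j) - 1

lemma build_mem {s : Finset (Fin n)} {q} {i : Fin n} (h : i ∈ s) : build s q i = 1 := by
  simp [build, h]

lemma build_not_mem {s : Finset (Fin n)} {q} {i : Fin n} (h : i ∈ sᶜ) :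
    build s q i = q (E s ⟨i, h⟩) + 1 := by
  simp [build, h]

lemma build_pos (s : Finset (Fin n)) (q) (i : Fin n) : 1 ≤ build s q i := by
  by_cases h : i ∈ sᶜ
  · rw [build_not_mem h]; omega
  · rw [build_mem (by simpa using h)]

lemma strip_build (s : Finset (Fin n)) (q) : strip s (build s q) = q := by
  funext j
  have h : ((E s).symm j : Fin n) ∈ sᶜ := ((E s).symm j).2
  rw [strip, build_not_mem h]
  simp

lemma build_strip {s : Finset (Fin n)} {p : Fin n → ℕ} (hp : ∀ i, 1 ≤ p i)
    (ho : ones p = s) : build s (strip s p) = p := by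
  funext i
  by_cases h : i ∈ sᶜ
  · rw [build_not_mem h, strip]
    have := hp i
    simp only [Equiv.symm_apply_apply]
    omega
  · rw [build_mem (by simpa using h)]
    have hi : i ∈ ones p := by rw [ho]; simpa using h
    exact (mem_ones.mp hi).symm

lemma ones_build {s : Finset (Fin n)} {q} (hq : ∀ j, 1 ≤ q j) : ones (build s q) = s := by
  ext i
  rw [mem_ones]
  constructor
  · intro h
    by_contra hi
    rw [build_not_mem (Finset.mem_compl.mpr hi)] at h
    have := hq (E s ⟨i, Finset.mem_compl.mpr hi⟩)
    omega
  · intro h; exact build_mem h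

lemma pos_of_ones_build {s : Finset (Fin n)} {q} (h : ones (build s q) = s) (j) : 1 ≤ q j := by
  by_contra hq0
  have hq0' : q j = 0 := by omega
  have hc : ((E s).symm j : Fin n) ∈ sᶜ := ((E s).symm j).2
  have hb : build s q ((E s).symm j) = 1 := by
    rw [build_not_mem hc]
    simp [hq0']
  have : ((E s).symm j : Fin n) ∈ ones (build s q) := mem_ones.mpr hb
  rw [h] at this
  exact Finset.mem_compl.mp hc this

lemma coe_build (s : Finset (Fin n)) (q) :
    Multiset.map (build s q) Finset.univ.val =
      Multiset.replicate s.card 1 + Multiset.map (· + 1) (Multiset.map q Finset.univ.val) := by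
  have hd : (Finset.univ : Finset (Fin n)) = s.disjUnion sᶜ disjoint_compl_right := by
    ext i; simp
  have huniv : (Finset.univ : Finset (Fin n)).val = s.val + sᶜ.val := by rw [hd]; rfl
  rw [huniv, Multiset.map_add]
  congr 1
  · rw [Multiset.map_congr rfl (fun i hi => build_mem hi), Multiset.map_const']
    rfl
  · have hval : sᶜ.val = Multiset.map Subtype.val (Finset.univ : Finset {x // x ∈ sᶜ}).val := by
      conv_lhs => rw [← Finset.attach_map_val (s := sᶜ)]
      rw [Finset.map_val, Finset.attach_eq_univ]
      rfl
    rw [hval, Multiset.map_map]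
    have h2 : Multiset.map (fun x : {x // x ∈ sᶜ} => build s q ↑x) Finset.univ.val
        = Multiset.map (fun x => q (E s x) + 1) Finset.univ.val :=
      Multiset.map_congr rfl (fun x _ => build_not_mem x.2)
    rw [show ((build s q) ∘ Subtype.val) = (fun x : {x // x ∈ sᶜ} => build s q ↑x) from rfl, h2]
    have h4 : Multiset.map (E s) (Finset.univ : Finset {x // x ∈ sᶜ}).val
        = (Finset.univ : Finset (Fin (n - s.card))).val := by
      have h := congrArg Finset.val (Finset.map_univ_equiv (E s))
      rwa [Finset.map_val, Equiv.coe_toEmbedding] at h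
    calc Multiset.map (fun x => q (E s x) + 1) Finset.univ.val
        = Multiset.map (fun j => q j + 1) (Multiset.map (E s) Finset.univ.val) := by
          rw [Multiset.map_map]; rfl
      _ = _ := by rw [h4, Multiset.map_map]; rfl

lemma sortPF_build (s : Finset (Fin n)) (q : Fin (n - s.card) → ℕ) :
    sortPF (build s q) = List.replicate s.card 1 ++ (sortPF q).map (· + 1) := by
  refine (fun hp h1 h2 => List.Perm.eq_of_pairwise' (r := (· ≤ ·))
    (l₂ := List.replicate s.card 1 ++ (sortPF q).map (· + 1)) h1 h2 hp) ?_ ?_ ?_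
  · rw [← Multiset.coe_eq_coe]
    have h1 : (↑(sortPF (build s q)) : Multiset ℕ) = ↑(List.ofFn (build s q)) :=
      Multiset.sort_eq _ _
    have h2 : (↑(sortPF q) : Multiset ℕ) = ↑(List.ofFn q) := Multiset.sort_eq _ _
    rw [h1, coe_ofFn, coe_build]
    rw [← Multiset.coe_add, Multiset.coe_replicate, ← Multiset.map_coe, h2, coe_ofFn,
      Multiset.map_map]
  · exact Multiset.pairwise_sort _ _
  · show List.Pairwise _ _
    rw [List.pairwise_append]
    refine ⟨List.pairwise_replicate.mpr (Or.inr (le_refl 1)), ?_, ?_⟩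
    · exact List.Pairwise.map _ (fun a b h => by omega) (Multiset.pairwise_sort _ _)
    · intro x hx y hy
      rw [List.mem_replicate] at hx
      rw [List.mem_map] at hy
      obtain ⟨z, _, rfl⟩ := hy
      omega

lemma getD_map_add_one (L : List ℕ) (j : ℕ) (hj : j < L.length) :
    (L.map (· + 1)).getD j 0 = L.getD j 0 + 1 := by
  rw [List.getD_eq_getElem _ _ (by simpa using hj), List.getD_eq_getElem _ _ hj,
    List.getElem_map]

lemma cond_iff {a : ℕ} (ha : 1 ≤ a) (s : Finset (Fin n)) (q : Fin (n - s.card) → ℕ) :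
    (∀ i : Fin n, (sortPF (build s q)).getD i 0 ≤ a + (i : ℕ)) ↔
    (∀ j : Fin (n - s.card), (sortPF q).getD j 0 ≤ (a + s.card - 1) + (j : ℕ)) := by
  have hk : s.card ≤ n := by simpa using Finset.card_le_card (Finset.subset_univ s)
  have hlen : (sortPF q).length = n - s.card := length_sortPF q
  constructor
  · intro h j
    have hjn : (j : ℕ) < n - s.card := j.2
    have hj : s.card + (j : ℕ) < n := by omega
    have h1 := h ⟨s.card + j, hj⟩
    rw [sortPF_build, List.getD_append_right _ _ _ _ (by simp)] at h1
    simp only [List.length_replicate, Nat.add_sub_cancel_left] at h1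
    rw [getD_map_add_one _ _ (by omega)] at h1
    omega
  · intro h i
    rw [sortPF_build]
    by_cases hik : (i : ℕ) < s.card
    · rw [List.getD_append _ _ _ _ (by simpa using hik)]
      rw [List.getD_eq_getElem _ _ (by simpa using hik), List.getElem_replicate]
      omega
    · have hi2 : (i : ℕ) < n := i.2
      rw [List.getD_append_right _ _ _ _ (by simpa using hik)]
      simp only [List.length_replicate]
      rw [getD_map_add_one _ _ (by omega)]
      have h1 : (sortPF q).getD ((i : ℕ) - s.card) 0 ≤ a + s.card - 1 + ((i : ℕ) - s.card) :=
        h ⟨(i : ℕ) - s.card, by omega⟩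
      omega

lemma key {a : ℕ} (ha : 1 ≤ a) (s : Finset (Fin n)) (q : Fin (n - s.card) → ℕ) :
    (IsAPF a (build s q) ∧ ones (build s q) = s) ↔ IsAPF (a + s.card - 1) q := by
  constructor
  · rintro ⟨⟨-, h2⟩, hones⟩
    exact ⟨pos_of_ones_build hones, (cond_iff ha s q).mp h2⟩
  · rintro ⟨hq, h2⟩
    exact ⟨⟨build_pos s q, (cond_iff ha s q).mpr h2⟩, ones_build hq⟩

noncomputable def fiberEquiv {a : ℕ} (ha : 1 ≤ a) (s : Finset (Fin n)) :
    {p : Fin n → ℕ // IsAPF a p ∧ ones p = s} ≃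
      {q : Fin (n - s.card) → ℕ // IsAPF (a + s.card - 1) q} where
  toFun x := ⟨strip s x.1, by
    have hb : build s (strip s x.1) = x.1 := build_strip x.2.1.1 x.2.2
    refine (key ha s _).mp ⟨?_, ?_⟩ <;> rw [hb]
    exacts [x.2.1, x.2.2]⟩
  invFun y := ⟨build s y.1, ((key ha s y.1).mpr y.2).1, ((key ha s y.1).mpr y.2).2⟩
  left_inv x := Subtype.ext (build_strip x.2.1.1 x.2.2)
  right_inv y := Subtype.ext (strip_build s y.1)

lemma card_sum {ι : Type*} [Fintype ι] (f : ι → Type*) [∀ i, Finite (f i)] :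
    Nat.card (Σ i, f i) = ∑ i, Nat.card (f i) := by
  classical
  haveI := fun i => Fintype.ofFinite (f i)
  simp [Nat.card_eq_fintype_card]

lemma pNum_eq_sum {a : ℕ} (ha : 1 ≤ a) :
    pNum n a = ∑ s : Finset (Fin n), pNum (n - s.card) (a + s.card - 1) := by
  rw [pNum,
    ← Nat.card_congr (Equiv.sigmaFiberEquiv (fun x : {p : Fin n → ℕ // IsAPF a p} => ones x.1)),
    card_sum]
  apply Finset.sum_congr rfl
  intro s _
  rw [pNum]
  exact Nat.card_congr ((Equiv.subtypeSubtypeEquivSubtypeInter _ _).trans (fiberEquiv ha s))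

end PFaux

open PFaux

/-- The fundamental recurrence `p(n,a) = Σ_{k=0}^n C(n,k) p(n-k, a+k-1)` for `a ≥ 1`,
with boundary conditions `p(n,0) = 0` for `n ≥ 1` and `p(0,a) = 1`. -/
theorem fundamental_recurrence :
    (∀ n a : ℕ, 1 ≤ a →
        pNum n a = ∑ k ∈ Finset.range (n + 1), n.choose k * pNum (n - k) (a + k - 1)) ∧
    (∀ n : ℕ, 1 ≤ n → pNum n 0 = 0) ∧
    (∀ a : ℕ, pNum 0 a = 1) := by
  refine ⟨?_, ?_, ?_⟩
  · intro n a ha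
    rw [pNum_eq_sum ha]
    rw [show (Finset.univ : Finset (Finset (Fin n))) = (Finset.univ : Finset (Fin n)).powerset
        from (Finset.powerset_univ).symm]
    rw [Finset.sum_powerset_apply_card (fun k => pNum (n - k) (a + k - 1))]
    simp [Finset.card_univ, mul_comm]
  · intro n hn
    have : IsEmpty {p : Fin n → ℕ // IsAPF 0 p} := by
      constructor
      rintro ⟨p, hp⟩
      have h0 := hp.2 ⟨0, hn⟩
      rw [getD_sortPF p 0 hn] at h0
      simp only [Nat.add_zero] at h0
      have hm : (sortPF p)[0]'(by rw [length_sortPF]; exact hn) ∈ sortPF p :=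
        List.getElem_mem _
      obtain ⟨i, hi⟩ := (mem_sortPF p _).mp hm
      have := hp.1 i
      omega
    simp [pNum]
  · intro a
    have : Unique {p : Fin 0 → ℕ // IsAPF a p} := by
      refine ⟨⟨⟨fun i => i.elim0, ?_, ?_⟩⟩, ?_⟩
      · intro i; exact i.elim0
      · intro i; exact i.elim0
      · rintro ⟨p, hp⟩
        apply Subtype.ext
        funext i
        exact i.elim0
    rw [pNum, Nat.card_unique]
end

section
/- The number of a-parking functions of length n containing exactly k entries equal to 1 is C(n,k) times the number of (a+k-1)-parking functions of length n-k. -/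
lemma coe_ofFn {α : Type*} {n : ℕ} (f : Fin n → α) :
    (↑(List.ofFn f) : Multiset α) = Multiset.map f Finset.univ.val := by
  rw [List.ofFn_eq_map]; rfl

section Split

variable {n k : ℕ} (p : Fin n → ℕ) (S : Finset (Fin n)) (hc : Sᶜ.card = n - k)

lemma multiset_split (hS : ∀ i, p i = 1 ↔ i ∈ S) (hpos : ∀ i, 1 ≤ p i)
    (hSc : S.card = k) :
    (↑(List.ofFn p) : Multiset ℕ) =
      Multiset.replicate k 1 +
        Multiset.map (· + 1) ↑(List.ofFn fun j => p (Sᶜ.orderEmbOfFin hc j) - 1) := by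
  rw [coe_ofFn, coe_ofFn]
  have huniv : (Finset.univ : Finset (Fin n)).val = S.val + Sᶜ.val := by
    have h1 : (S.disjUnion Sᶜ disjoint_compl_right).val = S.val + Sᶜ.val := rfl
    rw [← h1, Finset.disjUnion_eq_union, Finset.union_compl]
  rw [huniv, Multiset.map_add]
  congr 1
  · rw [Multiset.eq_replicate]
    constructor
    · rw [Multiset.card_map]; exact hSc
    · intro b hb
      obtain ⟨i, hi, rfl⟩ := Multiset.mem_map.1 hb
      exact (hS i).2 hi
  · have hinj : Function.Injective (Sᶜ.orderEmbOfFin hc) := (Sᶜ.orderEmbOfFin hc).injective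
    have himg : Finset.univ.image (Sᶜ.orderEmbOfFin hc) = Sᶜ := by
      apply Finset.eq_of_subset_of_card_le
      · intro x hx
        obtain ⟨j, _, rfl⟩ := Finset.mem_image.1 hx
        exact Finset.orderEmbOfFin_mem _ _ _
      · rw [Finset.card_image_of_injective _ hinj, hc, Finset.card_univ, Fintype.card_fin]
    have hval : Sᶜ.val = Multiset.map (Sᶜ.orderEmbOfFin hc) Finset.univ.val := by
      conv_lhs => rw [← himg]
      rw [Finset.image_val, Multiset.dedup_eq_self.2]
      exact Multiset.Nodup.map hinj Finset.univ.nodup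
    rw [hval, Multiset.map_map, Multiset.map_map]
    apply Multiset.map_congr rfl
    intro j _
    simp only [Function.comp_apply]
    have h2 : p (Sᶜ.orderEmbOfFin hc j) ≠ 1 := by
      intro h1
      have := (hS _).1 h1
      exact (Finset.mem_compl.1 (Finset.orderEmbOfFin_mem _ _ _)) this
    have := hpos (Sᶜ.orderEmbOfFin hc j)
    omega

lemma sort_split (q : Fin (n - k) → ℕ)
    (hq : q = fun j => p (Sᶜ.orderEmbOfFin hc j) - 1)
    (hS : ∀ i, p i = 1 ↔ i ∈ S) (hpos : ∀ i, 1 ≤ p i)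
    (hSc : S.card = k) :
    sortPF p = List.replicate k 1 ++ (sortPF q).map (· + 1) := by
  subst hq
  refine (fun hp h1 h2 => List.Perm.eq_of_pairwise' (r := (· ≤ · : ℕ → ℕ → Prop)) h1 h2 hp) ?_ ?_ ?_
  · rw [← Multiset.coe_eq_coe]
    have h1 : ((List.replicate k 1 ++
        (sortPF fun j => p (Sᶜ.orderEmbOfFin hc j) - 1).map (· + 1) : List ℕ) : Multiset ℕ)
        = Multiset.replicate k 1 +
          Multiset.map (· + 1) (↑(sortPF fun j => p (Sᶜ.orderEmbOfFin hc j) - 1) : Multiset ℕ) := by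
      rw [← Multiset.coe_add, Multiset.coe_replicate, Multiset.map_coe]
    rw [h1]
    unfold sortPF
    rw [Multiset.sort_eq, Multiset.sort_eq]
    exact multiset_split p S hc hS hpos hSc
  · exact Multiset.pairwise_sort _ _
  · rw [List.pairwise_append]
    refine ⟨List.pairwise_replicate.2 (Or.inr le_rfl), ?_, ?_⟩
    · apply List.Pairwise.map
      · intro x y (h : x ≤ y); exact Nat.add_le_add_right h 1
      · exact Multiset.pairwise_sort _ _
    · intro x hx y hy
      rw [List.eq_of_mem_replicate hx]
      obtain ⟨z, _, rfl⟩ := List.mem_map.1 hy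
      omega

lemma apf_iff (a : ℕ) (q : Fin (n - k) → ℕ)
    (hq : q = fun j => p (Sᶜ.orderEmbOfFin hc j) - 1)
    (ha : 1 ≤ a) (hk : k ≤ n) (hS : ∀ i, p i = 1 ↔ i ∈ S)
    (hpos : ∀ i, 1 ≤ p i) (hSc : S.card = k) :
    (∀ i : Fin n, (sortPF p).getD i 0 ≤ a + (i : ℕ)) ↔
      (∀ j : Fin (n - k), (sortPF q).getD j 0 ≤ (a + k - 1) + (j : ℕ)) := by
  have hsplit := sort_split p S hc q hq hS hpos hSc
  have hlq : (sortPF q).length = n - k := sortPF_length q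
  have hlp : (sortPF p).length = n := sortPF_length p
  constructor
  · intro H j
    have hjn : k + (j : ℕ) < n := by omega
    have h1 := H ⟨k + j, hjn⟩
    rw [hsplit] at h1
    rw [List.getD_eq_getElem _ _ (by omega : (j:ℕ) < (sortPF q).length)]
    rw [List.getD_eq_getElem _ _
      (by simp only [List.length_append, List.length_replicate, List.length_map, hlq]; omega)] at h1
    rw [List.getElem_append_right (by simp [List.length_replicate])] at h1
    simp only [List.length_replicate] at h1
    rw [List.getElem_map] at h1
    simp only [Nat.add_sub_cancel_left] at h1
    omega
  · intro H i
    rw [hsplit]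
    by_cases hik : (i : ℕ) < k
    · rw [List.getD_eq_getElem _ _
        (by simp only [List.length_append, List.length_replicate, List.length_map, hlq]; omega)]
      rw [List.getElem_append_left (by simpa [List.length_replicate] using hik)]
      rw [List.getElem_replicate]
      omega
    · push_neg at hik
      have hin : (i : ℕ) < n := i.2
      have hjn : (i : ℕ) - k < n - k := by omega
      have h1 := H ⟨(i : ℕ) - k, hjn⟩
      rw [List.getD_eq_getElem _ _ (by omega : (i:ℕ) - k < (sortPF q).length)] at h1
      rw [List.getD_eq_getElem _ _
        (by simp only [List.length_append, List.length_replicate, List.length_map, hlq]; omega)]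
      rw [List.getElem_append_right (by simpa [List.length_replicate] using hik)]
      simp only [List.length_replicate]
      rw [List.getElem_map]
      simp only at h1
      omega

end Split

section Main

variable {n k : ℕ}

/-- The backward map: from a set of "one"-positions and a shorter vector, build `p`. -/
def bwd (S : Finset (Fin n)) (hc : Sᶜ.card = n - k) (q : Fin (n - k) → ℕ) : Fin n → ℕ :=
  fun i => if h : i ∈ Sᶜ then q ((Sᶜ.orderIsoOfFin hc).symm ⟨i, h⟩) + 1 else 1

lemma bwd_ones (S : Finset (Fin n)) (hc : Sᶜ.card = n - k) (q : Fin (n - k) → ℕ)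
    (hqpos : ∀ j, 1 ≤ q j) (i : Fin n) : bwd S hc q i = 1 ↔ i ∈ S := by
  unfold bwd
  by_cases h : i ∈ Sᶜ
  · rw [dif_pos h]
    have h2 := hqpos ((Sᶜ.orderIsoOfFin hc).symm ⟨i, h⟩)
    have h3 := Finset.mem_compl.1 h
    constructor
    · omega
    · intro hiS; exact absurd hiS h3
  · rw [dif_neg h]
    have h3 : i ∈ S := by
      by_contra h4
      exact h (Finset.mem_compl.2 h4)
    simp [h3]

lemma bwd_pos (S : Finset (Fin n)) (hc : Sᶜ.card = n - k) (q : Fin (n - k) → ℕ)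
    (i : Fin n) : 1 ≤ bwd S hc q i := by
  unfold bwd
  by_cases h : i ∈ Sᶜ
  · rw [dif_pos h]; omega
  · rw [dif_neg h]

lemma bwd_emb (S : Finset (Fin n)) (hc : Sᶜ.card = n - k) (q : Fin (n - k) → ℕ)
    (j : Fin (n - k)) : bwd S hc q (Sᶜ.orderEmbOfFin hc j) = q j + 1 := by
  have hmem : Sᶜ.orderEmbOfFin hc j ∈ Sᶜ := Finset.orderEmbOfFin_mem _ _ _
  unfold bwd
  rw [dif_pos hmem]
  congr 1
  have h1 : (⟨Sᶜ.orderEmbOfFin hc j, hmem⟩ : {x // x ∈ Sᶜ}) = Sᶜ.orderIsoOfFin hc j :=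
    Subtype.ext (Finset.coe_orderIsoOfFin_apply Sᶜ hc j).symm
  rw [h1, OrderIso.symm_apply_apply]

lemma emb_symm (S : Finset (Fin n)) (hc : Sᶜ.card = n - k) (i : Fin n) (h : i ∈ Sᶜ) :
    Sᶜ.orderEmbOfFin hc ((Sᶜ.orderIsoOfFin hc).symm ⟨i, h⟩) = i := by
  have h1 := Finset.coe_orderIsoOfFin_apply Sᶜ hc ((Sᶜ.orderIsoOfFin hc).symm ⟨i, h⟩)
  rw [← h1, OrderIso.apply_symm_apply]

end Main

/-- The number of `a`-parking functions of length `n` with exactly `k` entries equal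
to `1` is `C(n,k)` times the number of `(a+k-1)`-parking functions of length `n-k`. -/
theorem a_parking_with_k_ones (a n k : ℕ) (ha : 1 ≤ a) (hk : k ≤ n) :
    Nat.card {p : Fin n → ℕ //
        IsAPF a p ∧ (Finset.univ.filter fun i => p i = 1).card = k} =
      n.choose k * Nat.card {q : Fin (n - k) → ℕ // IsAPF (a + k - 1) q} := by
  classical
  have hcompl : ∀ S : Finset (Fin n), S.card = k → Sᶜ.card = n - k := fun S hS => by
    rw [Finset.card_compl, hS, Fintype.card_fin]
  have hfilS : ∀ p : Fin n → ℕ, ∀ i, p i = 1 ↔ i ∈ Finset.univ.filter fun i => p i = 1 := by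
    intro p i; simp
  -- the forward auxiliary facts
  have fwd_apf : ∀ (p : Fin n → ℕ)
      (hp : IsAPF a p ∧ (Finset.univ.filter fun i => p i = 1).card = k),
      IsAPF (a + k - 1) (fun j => p (((Finset.univ.filter fun i => p i = 1)ᶜ).orderEmbOfFin
        (hcompl _ hp.2) j) - 1) := by
    intro p hp
    set S := Finset.univ.filter fun i => p i = 1 with hSdef
    constructor
    · intro j
      have h1 := hp.1.1 (Sᶜ.orderEmbOfFin (hcompl _ hp.2) j)
      have hmem := Finset.orderEmbOfFin_mem Sᶜ (hcompl _ hp.2) j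
      have h2 : ¬ p (Sᶜ.orderEmbOfFin (hcompl _ hp.2) j) = 1 := by
        intro h3
        exact (Finset.mem_compl.1 hmem) ((hfilS p _).1 h3)
      show 1 ≤ p (Sᶜ.orderEmbOfFin (hcompl _ hp.2) j) - 1
      omega
    · exact (apf_iff p S (hcompl _ hp.2) a _ rfl ha hk (hfilS p) hp.1.1 hp.2).1 hp.1.2
  have bwd_apf : ∀ (S : Finset (Fin n)) (hS : S.card = k) (q : Fin (n - k) → ℕ)
      (hq : IsAPF (a + k - 1) q),
      IsAPF a (bwd S (hcompl S hS) q) ∧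
        (Finset.univ.filter fun i => bwd S (hcompl S hS) q i = 1).card = k := by
    intro S hS q hq
    have hones := bwd_ones S (hcompl S hS) q hq.1
    have hpos := bwd_pos S (hcompl S hS) q
    have hfil : (Finset.univ.filter fun i => bwd S (hcompl S hS) q i = 1) = S := by
      ext i; simp [hones i]
    have hqeq : q = fun j => bwd S (hcompl S hS) q (Sᶜ.orderEmbOfFin (hcompl S hS) j) - 1 := by
      funext j; rw [bwd_emb]; omega
    refine ⟨⟨hpos, ?_⟩, by rw [hfil]; exact hS⟩
    exact (apf_iff (bwd S (hcompl S hS) q) S (hcompl S hS) a q hqeq ha hk hones hpos hS).2 hq.2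
  have e : {p : Fin n → ℕ //
        IsAPF a p ∧ (Finset.univ.filter fun i => p i = 1).card = k} ≃
      ({S : Finset (Fin n) // S.card = k} ×
        {q : Fin (n - k) → ℕ // IsAPF (a + k - 1) q}) := by
    refine
      { toFun := fun x =>
          (⟨Finset.univ.filter fun i => x.1 i = 1, x.2.2⟩,
           ⟨fun j => x.1 (((Finset.univ.filter fun i => x.1 i = 1)ᶜ).orderEmbOfFin
              (hcompl _ x.2.2) j) - 1, fwd_apf x.1 x.2⟩)
        invFun := fun y => ⟨bwd y.1.1 (hcompl y.1.1 y.1.2) y.2.1,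
          bwd_apf y.1.1 y.1.2 y.2.1 y.2.2⟩
        left_inv := ?_
        right_inv := ?_ }
    · rintro ⟨p, hp⟩
      apply Subtype.ext
      dsimp only
      funext i
      set S := Finset.univ.filter fun i => p i = 1 with hSdef
      unfold bwd
      by_cases h : i ∈ Sᶜ
      · rw [dif_pos h]
        dsimp only
        rw [emb_symm S (hcompl _ hp.2) i h]
        have h1 := hp.1.1 i
        have h2 : ¬ p i = 1 := fun h3 => (Finset.mem_compl.1 h) ((hfilS p i).1 h3)
        omega
      · rw [dif_neg h]
        have h3 : i ∈ S := by
          by_contra h4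
          exact h (Finset.mem_compl.2 h4)
        exact ((hfilS p i).2 h3).symm
    · rintro ⟨⟨S, hS⟩, ⟨q, hq⟩⟩
      have hones := bwd_ones S (hcompl S hS) q hq.1
      have hfil : (Finset.univ.filter fun i => bwd S (hcompl S hS) q i = 1) = S := by
        ext i; simp [hones i]
      have key : ∀ (T : Finset (Fin n)) (hT : T = S) (hcT : Tᶜ.card = n - k),
          (fun j => bwd S (hcompl S hS) q (Tᶜ.orderEmbOfFin hcT j) - 1) = q := by
        rintro T rfl hcT
        funext j
        rw [bwd_emb]
        omega
      apply Prod.ext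
      · exact Subtype.ext hfil
      · exact Subtype.ext (key _ hfil _)
  rw [Nat.card_congr e, Nat.card_prod, Nat.card_eq_fintype_card,
    Fintype.card_finset_len, Fintype.card_fin]
end

section
/- The polynomials P(n,a)(x) := Σ_{p ∈ P(n,a)} x^{Sum(p)} satisfy the recurrence P(n,a)(x) = x^n · Σ_{k=0}^{n} C(n,k) · P(n-k, a+k-1)(x), with P(0,a)(x)=1 and P(n,0)(x)=0 for n ≥ 1. -/
instance (a n : ℕ) : DecidablePred (fun p : Fin n → ℕ => IsAPF a p) :=
  fun p => decidable_of_iff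
    ((∀ i, 1 ≤ p i) ∧ ∀ i : Fin n, (sortPF p).getD i 0 ≤ a + (i : ℕ)) Iff.rfl

/-- The (finite) set of all `a`-parking functions of length `n`. -/
def pfFinset (a n : ℕ) : Finset (Fin n → ℕ) :=
  (Fintype.piFinset fun _ => Finset.Icc 1 (a + n)).filter (fun p => IsAPF a p)

/-- The generating polynomial of `a`-parking functions of length `n` by the sum
of the entries: `P(n,a)(x) = Σ_p x^(Sum p)`. -/
noncomputable def Ppoly (a n : ℕ) : Polynomial ℚ :=
  ∑ p ∈ pfFinset a n, Polynomial.X ^ (∑ i, p i)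

namespace PFrec

open Finset Polynomial

variable {n k : ℕ}

lemma length_sortPF (p : Fin n → ℕ) : (sortPF p).length = n := by
  simp [sortPF]

lemma sortPF_coe (p : Fin n → ℕ) : (↑(sortPF p) : Multiset ℕ) = ↑(List.ofFn p) :=
  Multiset.sort_eq ..

lemma sortPF_sorted (p : Fin n → ℕ) : (sortPF p).Pairwise (· ≤ ·) :=
  Multiset.pairwise_sort ..

lemma sortPF_eq {p : Fin n → ℕ} {L : List ℕ} (h : (↑L : Multiset ℕ) = ↑(List.ofFn p))
    (hs : L.Pairwise (· ≤ ·)) : sortPF p = L := by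
  refine List.Perm.eq_of_pairwise' (sortPF_sorted p) hs ?_
  rw [← Multiset.coe_eq_coe, sortPF_coe, h]

lemma ofFn_coe (p : Fin n → ℕ) :
    (↑(List.ofFn p) : Multiset ℕ) = Multiset.map p Finset.univ.val := by
  rw [List.ofFn_eq_map, ← Multiset.map_coe]
  congr 1

lemma mem_pfFinset {a : ℕ} {p : Fin n → ℕ} : p ∈ pfFinset a n ↔ IsAPF a p := by
  constructor
  · exact fun h => (Finset.mem_filter.1 h).2
  · intro h
    refine Finset.mem_filter.2 ⟨?_, h⟩
    rw [Fintype.mem_piFinset]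
    intro i
    rw [Finset.mem_Icc]
    refine ⟨h.1 i, ?_⟩
    have hmem : p i ∈ sortPF p := by
      rw [← Multiset.mem_coe, sortPF_coe, Multiset.mem_coe, List.mem_ofFn]
      exact ⟨i, rfl⟩
    obtain ⟨j, hjlt, hval⟩ := List.mem_iff_getElem.1 hmem
    have hj : j < n := by rw [← length_sortPF p]; exact hjlt
    have := h.2 ⟨j, hj⟩
    rw [List.getD_eq_getElem _ _ (by rw [length_sortPF]; exact hj)] at this
    simp only [Fin.val_mk] at this
    rw [hval] at this
    exact this.trans (by omega)

/-- The set of positions of the entries equal to 1. -/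
def oneSet (p : Fin n → ℕ) : Finset (Fin n) := Finset.univ.filter (fun i => p i = 1)

/-- Insert `k` ones at positions `S` into the vector `q + 1`. -/
def insK (S : Finset (Fin n)) (h : Sᶜ.card = n - k) (q : Fin (n - k) → ℕ) : Fin n → ℕ :=
  fun i => if hi : i ∈ Sᶜ then q ((Sᶜ.orderIsoOfFin h).symm ⟨i, hi⟩) + 1 else 1

/-- Extract the subvector of `p` indexed by `T`, subtracting 1 from each entry. -/
def extF (T : Finset (Fin n)) (h : T.card = n - k) (p : Fin n → ℕ) : Fin (n - k) → ℕ :=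
  fun j => p (T.orderIsoOfFin h j) - 1

lemma extF_congr {T T' : Finset (Fin n)} (hTT : T = T') (h : T.card = n - k)
    (h' : T'.card = n - k) (p : Fin n → ℕ) : extF T h p = extF T' h' p := by
  subst hTT; rfl

lemma insK_multiset (S : Finset (Fin n)) (h : Sᶜ.card = n - k) (q : Fin (n - k) → ℕ)
    (hk : S.card = k) :
    (↑(List.ofFn (insK S h q)) : Multiset ℕ)
      = Multiset.replicate k 1 + Multiset.map (fun x => x + 1) (↑(List.ofFn q)) := by
  have huniv : (Finset.univ : Finset (Fin n)) = S.disjUnion Sᶜ disjoint_compl_right := by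
    ext i; simp
  rw [ofFn_coe, huniv]
  show Multiset.map (insK S h q) (S.val + Sᶜ.val) = _
  rw [Multiset.map_add]
  congr 1
  · rw [Multiset.eq_replicate]
    constructor
    · simp [hk]
    · intro b hb
      obtain ⟨i, hi, rfl⟩ := Multiset.mem_map.1 hb
      have : i ∉ Sᶜ := by simp [Finset.mem_compl]; exact hi
      simp [insK, this]
  · have h1 : Sᶜ.val = Multiset.map Subtype.val Sᶜ.val.attach := by
      rw [Multiset.attach_map_val]
    rw [h1, Multiset.map_map]
    have h2 : ∀ x : {x // x ∈ Sᶜ.val},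
        (insK S h q ∘ Subtype.val) x = q ((Sᶜ.orderIsoOfFin h).symm ⟨x.1, x.2⟩) + 1 := by
      intro x
      have hx : (x : Fin n) ∈ Sᶜ := x.2
      simp only [Function.comp, insK]
      rw [dif_pos hx]
    rw [Multiset.map_congr rfl (fun x _ => h2 x)]
    rw [ofFn_coe, Multiset.map_map]
    have h4 : Multiset.map (fun x : {x // x ∈ Sᶜ.val} => (Sᶜ.orderIsoOfFin h).symm ⟨x.1, x.2⟩)
        Sᶜ.val.attach = (Finset.univ : Finset (Fin (n - k))).val := by
      refine (Multiset.Nodup.ext ?_ ?_).mpr ?_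
      · refine Multiset.Nodup.map ?_ (Multiset.nodup_attach.2 Sᶜ.nodup)
        intro x y hxy
        have := (Sᶜ.orderIsoOfFin h).symm.injective hxy
        exact Subtype.ext (congrArg Subtype.val this)
      · exact Finset.univ.nodup
      · intro j
        simp only [Multiset.mem_map, Finset.mem_val, Finset.mem_univ, iff_true]
        refine ⟨⟨((Sᶜ.orderIsoOfFin h) j : Fin n), ((Sᶜ.orderIsoOfFin h) j).2⟩,
          Multiset.mem_attach _ _, ?_⟩
        have : (⟨((Sᶜ.orderIsoOfFin h) j : Fin n), ((Sᶜ.orderIsoOfFin h) j).2⟩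
            : {x // x ∈ Sᶜ}) = (Sᶜ.orderIsoOfFin h) j := rfl
        rw [this]
        simp
    rw [← h4, Multiset.map_map]
    rfl

lemma insK_sum (S : Finset (Fin n)) (h : Sᶜ.card = n - k) (q : Fin (n - k) → ℕ)
    (hk : S.card = k) (hkn : k ≤ n) :
    ∑ i, insK S h q i = n + ∑ j, q j := by
  have h1 : ∑ i, insK S h q i = ((↑(List.ofFn (insK S h q)) : Multiset ℕ)).sum := by
    rw [Multiset.sum_coe, List.sum_ofFn]
  rw [h1, insK_multiset S h q hk]
  rw [Multiset.sum_add, Multiset.sum_replicate]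
  have h2 : (Multiset.map (fun x => x + 1) (↑(List.ofFn q) : Multiset ℕ)).sum
      = (∑ j, q j) + (n - k) := by
    rw [Multiset.sum_map_add]
    simp [Multiset.map_id', Multiset.sum_coe, List.sum_ofFn, Multiset.map_const, Multiset.sum_replicate]
  rw [h2]
  simp [smul_eq_mul]
  omega

lemma sortPF_insK (S : Finset (Fin n)) (h : Sᶜ.card = n - k) (q : Fin (n - k) → ℕ)
    (hk : S.card = k) :
    sortPF (insK S h q) = List.replicate k 1 ++ List.map (· + 1) (sortPF q) := by
  apply sortPF_eq
  · rw [← Multiset.coe_add, Multiset.coe_replicate, ← Multiset.map_coe, sortPF_coe,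
      insK_multiset S h q hk]
  · rw [List.pairwise_append]
    refine ⟨List.pairwise_replicate.2 (Or.inr le_rfl), ?_, ?_⟩
    · rw [List.pairwise_map]
      exact (sortPF_sorted q).imp (by intro a b hab; omega)
    · intro a ha b hb
      have := List.eq_of_mem_replicate ha
      obtain ⟨c, hc, rfl⟩ := List.mem_map.1 hb
      omega

lemma getD_insK_lt (S : Finset (Fin n)) (h : Sᶜ.card = n - k) (q : Fin (n - k) → ℕ)
    (hk : S.card = k) {i : ℕ} (hi : i < k) :
    (sortPF (insK S h q)).getD i 0 = 1 := by
  rw [sortPF_insK S h q hk, List.getD_append _ _ _ _ (by simpa using hi)]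
  rw [List.getD_eq_getElem _ _ (by simpa using hi)]
  exact List.getElem_replicate _

lemma getD_insK_ge (S : Finset (Fin n)) (h : Sᶜ.card = n - k) (q : Fin (n - k) → ℕ)
    (hk : S.card = k) {i : ℕ} (hik : k ≤ i) (hin : i < n) :
    (sortPF (insK S h q)).getD i 0 = (sortPF q).getD (i - k) 0 + 1 := by
  rw [sortPF_insK S h q hk, List.getD_append_right _ _ _ _ (by simpa using hik)]
  simp only [List.length_replicate]
  have hlen : i - k < (List.map (· + 1) (sortPF q)).length := by
    rw [List.length_map, length_sortPF]; omega
  rw [List.getD_eq_getElem _ _ hlen, List.getElem_map,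
    List.getD_eq_getElem _ _ (by rw [length_sortPF]; omega)]

lemma isAPF_insK {a : ℕ} (ha : 1 ≤ a) (S : Finset (Fin n)) (h : Sᶜ.card = n - k)
    (q : Fin (n - k) → ℕ) (hk : S.card = k) (hq1 : ∀ j, 1 ≤ q j) :
    IsAPF a (insK S h q) ↔ IsAPF (a + k - 1) q := by
  have hkn : k ≤ n := hk ▸ (Finset.card_le_univ S).trans_eq (by simp)
  constructor
  · rintro ⟨-, h2⟩
    refine ⟨hq1, ?_⟩
    intro j
    have hjk : k + (j : ℕ) < n := by omega
    have := h2 ⟨k + j, hjk⟩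
    rw [getD_insK_ge S h q hk (by omega) hjk] at this
    simp only at this
    have heq : k + (j : ℕ) - k = (j : ℕ) := by omega
    rw [heq] at this
    omega
  · rintro ⟨-, h2⟩
    constructor
    · intro i
      unfold insK
      split <;> omega
    · intro i
      by_cases hik : (i : ℕ) < k
      · rw [getD_insK_lt S h q hk hik]; omega
      · rw [getD_insK_ge S h q hk (by omega) i.is_lt]
        have := h2 ⟨(i : ℕ) - k, by omega⟩
        simp only at this
        omega

lemma oneSet_insK (S : Finset (Fin n)) (h : Sᶜ.card = n - k) (q : Fin (n - k) → ℕ)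
    (hq1 : ∀ j, 1 ≤ q j) : oneSet (insK S h q) = S := by
  ext i
  simp only [oneSet, Finset.mem_filter, Finset.mem_univ, true_and]
  simp only [insK]
  by_cases hi : i ∈ Sᶜ
  · rw [dif_pos hi]
    have := hq1 ((Sᶜ.orderIsoOfFin h).symm ⟨i, hi⟩)
    constructor
    · omega
    · intro hiS; exact absurd hiS (Finset.mem_compl.1 hi)
  · rw [dif_neg hi]
    simp [Finset.mem_compl, not_not] at hi
    simp [hi]

lemma extF_insK (S : Finset (Fin n)) (h : Sᶜ.card = n - k) (q : Fin (n - k) → ℕ) :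
    extF Sᶜ h (insK S h q) = q := by
  funext j
  unfold extF insK
  rw [dif_pos (Sᶜ.orderIsoOfFin h j).2]
  have : (⟨((Sᶜ.orderIsoOfFin h) j : Fin n), (Sᶜ.orderIsoOfFin h j).2⟩ : {x // x ∈ Sᶜ})
      = Sᶜ.orderIsoOfFin h j := rfl
  rw [this]
  simp

lemma insK_extF (p : Fin n → ℕ) (hp1 : ∀ i, 1 ≤ p i) (h : (oneSet p)ᶜ.card = n - k) :
    insK (oneSet p) h (extF (oneSet p)ᶜ h p) = p := by
  funext i
  unfold insK extF
  by_cases hi : i ∈ (oneSet p)ᶜ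
  · rw [dif_pos hi]
    rw [show ((oneSet p)ᶜ.orderIsoOfFin h) (((oneSet p)ᶜ.orderIsoOfFin h).symm ⟨i, hi⟩)
        = ⟨i, hi⟩ from ((oneSet p)ᶜ.orderIsoOfFin h).apply_symm_apply _]
    have := hp1 i
    show p i - 1 + 1 = p i
    omega
  · rw [dif_neg hi]
    simp only [Finset.mem_compl, not_not, oneSet, Finset.mem_filter, Finset.mem_univ,
      true_and] at hi
    omega

lemma step (a : ℕ) (ha : 1 ≤ a) (hk : k ≤ n) :
    ∑ x ∈ (Finset.powersetCard k (Finset.univ : Finset (Fin n))) ×ˢ pfFinset (a + k - 1) (n - k),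
        (Polynomial.X : Polynomial ℚ) ^ (n + ∑ j, x.2 j)
      = ∑ p ∈ (pfFinset a n).filter (fun p => (oneSet p).card = k),
          (Polynomial.X : Polynomial ℚ) ^ (∑ i, p i) := by
  have cardc : ∀ S : Finset (Fin n), S.card = k → Sᶜ.card = n - k := by
    intro S hS
    rw [Finset.card_compl, hS]
    simp
  refine Finset.sum_bij'
    (i := fun x hx => insK x.1
      (cardc x.1 (Finset.mem_powersetCard.1 (Finset.mem_product.1 hx).1).2) x.2)
    (j := fun p hp => (oneSet p,
      extF (oneSet p)ᶜ (cardc (oneSet p) (Finset.mem_filter.1 hp).2) p))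
    ?_ ?_ ?_ ?_ ?_
  · -- hi : maps into filter
    intro x hx
    obtain ⟨hx1, hx2⟩ := Finset.mem_product.1 hx
    have hS := (Finset.mem_powersetCard.1 hx1).2
    have hq := mem_pfFinset.1 hx2
    rw [Finset.mem_filter]
    constructor
    · exact mem_pfFinset.2 ((isAPF_insK ha x.1 (cardc x.1 hS) x.2 hS hq.1).2 hq)
    · rw [oneSet_insK x.1 (cardc x.1 hS) x.2 hq.1, hS]
  · -- hj : maps into product
    intro p hp
    obtain ⟨hp1, hp2⟩ := Finset.mem_filter.1 hp
    have hpf := mem_pfFinset.1 hp1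
    rw [Finset.mem_product]
    constructor
    · exact Finset.mem_powersetCard.2 ⟨Finset.subset_univ _, hp2⟩
    · rw [mem_pfFinset]
      have hq1 : ∀ j, 1 ≤ extF (oneSet p)ᶜ (cardc (oneSet p) hp2) p j := by
        intro j
        unfold extF
        set x := ((oneSet p)ᶜ.orderIsoOfFin (cardc (oneSet p) hp2)) j with hx
        have hm : (x : Fin n) ∈ (oneSet p)ᶜ := x.2
        rw [Finset.mem_compl] at hm
        simp only [oneSet, Finset.mem_filter, Finset.mem_univ, true_and] at hm
        have h1 := hpf.1 (x : Fin n)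
        omega
      rw [← isAPF_insK ha (oneSet p) (cardc (oneSet p) hp2) _ hp2 hq1]
      rw [insK_extF p hpf.1 (cardc (oneSet p) hp2)]
      exact hpf
  · -- left inverse
    intro x hx
    obtain ⟨hx1, hx2⟩ := Finset.mem_product.1 hx
    have hS := (Finset.mem_powersetCard.1 hx1).2
    have hq := mem_pfFinset.1 hx2
    have hone : oneSet (insK x.1 (cardc x.1 hS) x.2) = x.1 :=
      oneSet_insK x.1 (cardc x.1 hS) x.2 hq.1
    refine Prod.ext hone ?_
    dsimp only
    rw [extF_congr (congrArg compl hone) _ (cardc x.1 hS)]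
    exact extF_insK x.1 (cardc x.1 hS) x.2
  · -- right inverse
    intro p hp
    obtain ⟨hp1, hp2⟩ := Finset.mem_filter.1 hp
    exact insK_extF p (mem_pfFinset.1 hp1).1 (cardc (oneSet p) hp2)
  · -- summands
    intro x hx
    obtain ⟨hx1, hx2⟩ := Finset.mem_product.1 hx
    have hS := (Finset.mem_powersetCard.1 hx1).2
    rw [insK_sum x.1 (cardc x.1 hS) x.2 hS hk]

end PFrec

open Finset Polynomial PFrec in
/-- `P(n,a)(x) = x^n Σ_{k=0}^n C(n,k) P(n-k, a+k-1)(x)` for `a ≥ 1`, with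
`P(0,a)(x) = 1` and `P(n,0)(x) = 0` for `n ≥ 1`. -/
theorem Ppoly_recurrence :
    (∀ a n : ℕ, 1 ≤ a →
        Ppoly a n = Polynomial.X ^ n *
          ∑ k ∈ Finset.range (n + 1),
            (n.choose k : Polynomial ℚ) * Ppoly (a + k - 1) (n - k)) ∧
    (∀ a : ℕ, Ppoly a 0 = 1) ∧
    (∀ n : ℕ, 1 ≤ n → Ppoly 0 n = 0) := by
  refine ⟨?_, ?_, ?_⟩
  · intro a n ha
    have hsplit : Ppoly a n = ∑ k ∈ Finset.range (n + 1),
        ∑ p ∈ (pfFinset a n).filter (fun p => (oneSet p).card = k),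
          (Polynomial.X : Polynomial ℚ) ^ (∑ i, p i) := by
      rw [Ppoly]
      refine (Finset.sum_fiberwise_of_maps_to ?_ _).symm
      intro p _
      rw [Finset.mem_range]
      exact Nat.lt_succ_of_le ((Finset.card_le_univ _).trans_eq (by simp))
    rw [hsplit]
    rw [Finset.mul_sum]
    refine Finset.sum_congr rfl ?_
    intro k hkr
    have hk : k ≤ n := by rw [Finset.mem_range] at hkr; omega
    rw [← step a ha hk]
    rw [Finset.sum_product]
    have hconst : ∀ S ∈ Finset.powersetCard k (Finset.univ : Finset (Fin n)),
        ∑ q ∈ pfFinset (a + k - 1) (n - k), (Polynomial.X : Polynomial ℚ) ^ (n + ∑ j, q j)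
          = Polynomial.X ^ n * Ppoly (a + k - 1) (n - k) := by
      intro S _
      rw [Ppoly, Finset.mul_sum]
      exact Finset.sum_congr rfl fun q _ => pow_add _ _ _
    rw [Finset.sum_congr rfl hconst, Finset.sum_const, Finset.card_powersetCard]
    simp only [Finset.card_univ, Fintype.card_fin]
    rw [nsmul_eq_mul]
    ring
  · intro a
    have : pfFinset a 0 = {fun i : Fin 0 => 1} := by
      ext p
      simp only [Finset.mem_singleton]
      constructor
      · intro _; funext i; exact i.elim0
      · intro hp
        subst hp
        rw [PFrec.mem_pfFinset]
        exact ⟨fun i => i.elim0, fun i => i.elim0⟩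
    rw [Ppoly, this]
    simp
  · intro n hn
    rw [Ppoly]
    convert Finset.sum_empty
    rw [Finset.eq_empty_iff_forall_notMem]
    intro p hp
    have h := PFrec.mem_pfFinset.1 hp
    have h0 := h.2 ⟨0, by omega⟩
    simp only [Fin.val_mk, add_zero, Nat.zero_add] at h0
    -- sortPF p at 0 is ≥ 1
    have hlen : 0 < (sortPF p).length := by rw [PFrec.length_sortPF]; omega
    rw [List.getD_eq_getElem _ _ hlen] at h0
    have hmem : (sortPF p)[0] ∈ sortPF p := List.getElem_mem _
    rw [← Multiset.mem_coe, PFrec.sortPF_coe, Multiset.mem_coe, List.mem_ofFn] at hmem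
    obtain ⟨i, hi⟩ := hmem
    have := h.1 i
    omega
end

section
/- Setting x = 1 in the weighted count recovers the naive count: P(n,a)(1) = a(a+n)^{n-1} for a ≥ 1, n ≥ 1. -/
open Finset
set_option linter.unusedSectionVars false

/-! ### Counting entries of a tuple -/

theorem countP_ofFn (k : ℕ) (f : Fin k → ℕ) (P : ℕ → Bool) :
    (List.ofFn f).countP P = (univ.filter (fun i => P (f i))).card := by
  induction k with
  | zero => simp
  | succ k ih =>
    rw [List.ofFn_succ, List.countP_cons, ih (fun i => f i.succ)]
    rw [Fin.card_filter_univ_succ]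
    by_cases h : P (f 0) <;> simp [h, Nat.add_comm]

theorem card_fin_lt (len i : ℕ) (h : i ≤ len) :
    (univ.filter fun j : Fin len => (j:ℕ) < i).card = i := by
  have : (univ.filter fun j : Fin len => (j:ℕ) < i).card = (Finset.range i).card := by
    refine Finset.card_bij' (fun j _ => (j : ℕ))
      (fun t ht => (⟨t, lt_of_lt_of_le (Finset.mem_range.mp ht) h⟩ : Fin len)) ?_ ?_ ?_ ?_
    · intro j hj; simpa using (Finset.mem_filter.mp hj).2
    · intro t ht; simp [Finset.mem_range.mp ht]
    · intro j hj; simp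
    · intro t ht; simp
  simpa using this

/-- For a sorted list, the `i`-th entry is `≤ v` iff more than `i` entries are `≤ v`. -/
theorem sorted_getD_le_iff (L : List ℕ) (hL : L.Pairwise (· ≤ ·)) (i : ℕ) (hi : i < L.length)
    (v : ℕ) : L.getD i 0 ≤ v ↔ i < L.countP (fun x => decide (x ≤ v)) := by
  have hcnt : L.countP (fun x => decide (x ≤ v))
      = (univ.filter (fun j : Fin L.length => L.get j ≤ v)).card := by
    conv_lhs => rw [← List.ofFn_get L]
    rw [countP_ofFn]; simp
  have hgetD : L.getD i 0 = L.get ⟨i, hi⟩ := by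
    rw [List.getD_eq_getElem _ _ hi]; simp
  rw [hcnt, hgetD]
  constructor
  · intro hle
    have hsub : (univ.filter fun j : Fin L.length => (j:ℕ) < i + 1)
        ⊆ (univ.filter (fun j : Fin L.length => L.get j ≤ v)) := by
      intro j hj
      simp only [Finset.mem_filter, Finset.mem_univ, true_and] at hj ⊢
      have : L.get j ≤ L.get ⟨i, hi⟩ := hL.rel_get_of_le (by exact Nat.lt_succ_iff.mp hj)
      exact le_trans this hle
    have := Finset.card_le_card hsub
    rwa [card_fin_lt _ _ hi] at this
  · intro hlt
    by_contra hv
    push_neg at hv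
    have hsub : (univ.filter (fun j : Fin L.length => L.get j ≤ v))
        ⊆ (univ.filter fun j : Fin L.length => (j:ℕ) < i) := by
      intro j hj
      simp only [Finset.mem_filter, Finset.mem_univ, true_and] at hj ⊢
      by_contra hji
      push_neg at hji
      have : L.get ⟨i, hi⟩ ≤ L.get j := hL.rel_get_of_le (by exact hji)
      omega
    have := Finset.card_le_card hsub
    rw [card_fin_lt _ _ (le_of_lt hi)] at this
    omega

/-- Characterization of `a`-parking functions by counting. -/
theorem isAPF_iff (a : ℕ) {n : ℕ} (p : Fin n → ℕ) :
    IsAPF a p ↔ ((∀ i, 1 ≤ p i) ∧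
      ∀ i : Fin n, (i:ℕ) < (univ.filter fun j => p j ≤ a + (i:ℕ)).card) := by
  unfold IsAPF
  refine and_congr_right fun _ => forall_congr' fun i => ?_
  have hlen : (sortPF p).length = n := by
    simp [sortPF, Multiset.length_sort]
  have hsort : (sortPF p).Pairwise (· ≤ ·) := Multiset.pairwise_sort _ _
  rw [sorted_getD_le_iff _ hsort i (by rw [hlen]; exact i.isLt)]
  have hperm : (sortPF p).Perm (List.ofFn p) := by
    have : ((sortPF p : List ℕ) : Multiset ℕ) = (↑(List.ofFn p) : Multiset ℕ) :=
      Multiset.sort_eq _ _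
    exact Multiset.coe_eq_coe.mp this
  rw [hperm.countP_eq, countP_ofFn]
  simp

/-! ### The cycle-lemma setup -/

section Cycle
variable {n m : ℕ} [NeZero m] (q : Fin n → ZMod m)

/-- Number of entries of `q` equal to `t` mod `m`. -/
def cntN (t : ℕ) : ℕ := (univ.filter fun i : Fin n => q i = (t : ZMod m)).card

/-- The walk `T s = (number of entries among residues `0..s-1`) - s`. -/
def walkT (s : ℕ) : ℤ := (∑ t ∈ range s, (cntN q t : ℤ)) - s

theorem walkT_succ (s : ℕ) : walkT q (s+1) = walkT q s + (cntN q s : ℤ) - 1 := by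
  simp [walkT, Finset.sum_range_succ]; ring

theorem walkT_ge (s k : ℕ) : walkT q (s + k) ≥ walkT q s - k := by
  induction k with
  | zero => simp
  | succ k ih =>
    have h := walkT_succ q (s + k)
    have h0 : (0:ℤ) ≤ (cntN q (s+k) : ℤ) := Int.natCast_nonneg _
    have he : s + (k+1) = (s + k) + 1 := by ring
    rw [he]
    push_cast
    push_cast at ih
    omega

theorem sum_cntN_period (s : ℕ) :
    ∑ t ∈ Finset.Ico s (s + m), cntN q t = n := by
  have h1 : ∑ r : ZMod m, (univ.filter fun i : Fin n => q i = r).card = n := by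
    rw [← Finset.card_eq_sum_card_fiberwise (fun (x : Fin n) (_ : x ∈ univ) => mem_univ (q x))]
    simp
  conv_rhs => rw [← h1]
  refine Finset.sum_nbij' (i := fun t => ((t : ℕ) : ZMod m))
    (j := fun r => s + (r - (s : ZMod m)).val) ?_ ?_ ?_ ?_ ?_
  · intro t ht; exact mem_univ _
  · intro r _
    have : (r - (s:ZMod m)).val < m := ZMod.val_lt _
    simp [Finset.mem_Ico]; omega
  · intro t ht
    simp only [Finset.mem_Ico] at ht
    obtain ⟨h1, h2⟩ := ht
    have h3 : ((t : ℕ) : ZMod m) - (s : ZMod m) = ((t - s : ℕ) : ZMod m) := by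
      rw [Nat.cast_sub h1]
    show s + (((t:ℕ):ZMod m) - (s:ZMod m)).val = t
    rw [h3, ZMod.val_cast_of_lt (by omega)]
    omega
  · intro r _
    push_cast
    rw [ZMod.natCast_val, ZMod.cast_id]
    ring
  · intro t _; rfl

theorem walkT_period (s : ℕ) : walkT q (s + m) = walkT q s + n - m := by
  have h1 : ∑ t ∈ range s, (cntN q t : ℤ) + ∑ t ∈ Finset.Ico s (s+m), (cntN q t : ℤ)
      = ∑ t ∈ range (s+m), (cntN q t : ℤ) := by
    simp only [Finset.range_eq_Ico]
    exact Finset.sum_Ico_consecutive _ (Nat.zero_le s) (Nat.le_add_right s m)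
  have h2 : ∑ t ∈ Finset.Ico s (s+m), (cntN q t : ℤ) = (n : ℤ) := by
    rw [← Nat.cast_sum, sum_cntN_period q s]
  simp only [walkT]
  push_cast
  omega

theorem card_window (c : ZMod m) (w : ℕ) (hw : w < m) :
    (univ.filter fun i : Fin n => (q i + c).val ≤ w).card
      = ∑ t ∈ range (w+1), cntN q ((-c).val + t) := by
  set d := (-c).val with hd
  have key : (univ.filter fun i : Fin n => (q i + c).val ≤ w)
      = (range (w+1)).biUnion
          (fun t => univ.filter fun i : Fin n => q i = ((d + t : ℕ) : ZMod m)) := by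
    ext i
    simp only [Finset.mem_filter, Finset.mem_univ, true_and, Finset.mem_biUnion,
      Finset.mem_range]
    constructor
    · intro h
      refine ⟨(q i + c).val, by omega, ?_⟩
      push_cast
      rw [hd, ZMod.natCast_val, ZMod.cast_id, ZMod.natCast_val, ZMod.cast_id]
      ring_nf
    · rintro ⟨t, ht, hq⟩
      rw [hq]
      push_cast
      rw [hd, ZMod.natCast_val, ZMod.cast_id]
      have : -c + (t:ZMod m) + c = (t : ZMod m) := by ring
      rw [this, ZMod.val_cast_of_lt (by omega)]
      omega
  rw [key, Finset.card_biUnion]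
  · rfl
  · intro t ht t' ht' hne
    simp only [Finset.coe_range, Set.mem_Iio, Function.onFun] at ht ht' ⊢
    rw [Finset.disjoint_filter]
    intro i _ h1 h2
    rw [h1] at h2
    apply hne
    have h3 : (t : ZMod m) = (t' : ZMod m) := by
      have h4 := h2
      push_cast at h4
      exact add_left_cancel h4
    have := congrArg ZMod.val h3
    rwa [ZMod.val_cast_of_lt (by omega), ZMod.val_cast_of_lt (by omega)] at this

theorem sum_window (d j : ℕ) :
    (∑ t ∈ range j, (cntN q (d + t) : ℤ)) = walkT q (d + j) - walkT q d + j := by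
  have h1 : ∑ t ∈ range d, (cntN q t : ℤ) + ∑ t ∈ Finset.Ico d (d+j), (cntN q t : ℤ)
      = ∑ t ∈ range (d+j), (cntN q t : ℤ) := by
    simp only [Finset.range_eq_Ico]
    exact Finset.sum_Ico_consecutive _ (Nat.zero_le d) (Nat.le_add_right d j)
  have h2 : ∑ t ∈ Finset.Ico d (d+j), (cntN q t : ℤ)
      = ∑ t ∈ range j, (cntN q (d + t) : ℤ) := by
    rw [Finset.sum_Ico_eq_sum_range]
    simp
  simp only [walkT]
  push_cast
  omega

end Cycle

/-! ### Records of the walk -/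

section Records
variable (T : ℕ → ℤ)

def minT (e : ℕ) : ℤ :=
  ((range (e+1)).image T).min' (by simp [Finset.Nonempty.image, Finset.nonempty_range_iff])

theorem minT_le {u e : ℕ} (h : u ≤ e) : minT T e ≤ T u := by
  apply Finset.min'_le
  exact Finset.mem_image_of_mem T (Finset.mem_range.mpr (by omega))

theorem exists_minT (e : ℕ) : ∃ u ≤ e, minT T e = T u := by
  obtain ⟨x, hx, hmin⟩ := Finset.mem_image.mp (Finset.min'_mem ((range (e+1)).image T) _)
  exact ⟨x, by have := Finset.mem_range.mp hx; omega, hmin.symm⟩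

theorem minT_succ (e : ℕ) : minT T (e+1) = min (minT T e) (T (e+1)) := by
  apply le_antisymm
  · apply le_min
    · obtain ⟨u, hu, heq⟩ := exists_minT T e
      rw [heq]; exact minT_le T (by omega)
    · exact minT_le T (by omega)
  · obtain ⟨u, hu, heq⟩ := exists_minT T (e+1)
    rw [heq]
    rcases Nat.lt_or_ge u (e+1) with h | h
    · exact le_trans (min_le_left _ _) (minT_le T (by omega))
    · have : u = e + 1 := by omega
      rw [this]; exact min_le_right _ _
end Records

section RecordCount
variable (a m : ℕ) (T : ℕ → ℤ)
variable (hstep : ∀ s, T (s+1) ≥ T s - 1) (hper : ∀ s, T (s + m) = T s - a)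
variable (ha : 1 ≤ a) (hm : 1 ≤ m)

include hstep hper ha hm

theorem record_iff {d : ℕ} (hd : d < m) :
    (∀ u, d < u → u < d + m → T u > T (d + m)) ↔ T (d + m) < minT T (d + m - 1) := by
  constructor
  · intro R
    obtain ⟨u₀, hu₀, heq⟩ := exists_minT T (d + m - 1)
    rw [heq]
    rcases Nat.lt_trichotomy u₀ d with h | h | h
    · have h1 : T (u₀ + m) > T (d + m) := R (u₀ + m) (by omega) (by omega)
      have h2 := hper u₀
      omega
    · subst h
      have h2 := hper u₀
      omega
    · exact R u₀ (by omega) (by omega)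
  · intro hlt u hu1 hu2
    have := minT_le T (u := u) (e := d + m - 1) (by omega)
    omega

theorem minT_drop (e : ℕ) :
    minT T e - minT T (e+1) = if T (e+1) < minT T e then 1 else 0 := by
  have h1 := minT_succ T e
  have h2 := minT_le T (le_refl e)
  have h3 := hstep e
  rcases lt_or_ge (T (e+1)) (minT T e) with h | h
  · rw [if_pos h]
    rw [h1, min_eq_right (le_of_lt h)]
    omega
  · rw [if_neg (not_lt.mpr h)]
    rw [h1, min_eq_left h]
    omega

theorem minT_two_period : minT T (2*m - 1) = minT T (m-1) - a := by
  apply le_antisymm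
  · obtain ⟨u₀, hu₀, heq⟩ := exists_minT T (m - 1)
    have h1 : minT T (2*m-1) ≤ T (u₀ + m) := minT_le T (by omega)
    have h2 := hper u₀
    omega
  · obtain ⟨u₁, hu₁, heq⟩ := exists_minT T (2*m - 1)
    rw [heq]
    rcases Nat.lt_or_ge u₁ m with h | h
    · have := minT_le T (u := u₁) (e := m-1) (by omega)
      omega
    · have h2 := hper (u₁ - m)
      rw [Nat.sub_add_cancel h] at h2
      have := minT_le T (u := u₁ - m) (e := m-1) (by omega)
      omega

theorem record_count [DecidablePred fun d => ∀ u, d < u → u < d + m → T u > T (d + m)] :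
    ((range m).filter fun d => ∀ u, d < u → u < d + m → T u > T (d + m)).card = a := by
  have key : (((range m).filter fun d =>
      ∀ u, d < u → u < d + m → T u > T (d + m)).card : ℤ) = a := by
    rw [Finset.card_filter]
    push_cast
    have step1 : ∀ d ∈ range m,
        (if (∀ u, d < u → u < d + m → T u > T (d + m)) then (1:ℤ) else 0)
          = minT T (m - 1 + d) - minT T (m - 1 + (d+1)) := by
      intro d hd
      have hdm : d < m := Finset.mem_range.mp hd
      have h1 : m - 1 + d = d + m - 1 := by omega
      have h2 : m - 1 + (d + 1) = (d + m - 1) + 1 := by omega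
      have h3 : (d + m - 1) + 1 = d + m := by omega
      rw [h1, h2, minT_drop a m T hstep hper ha hm, h3]
      by_cases hR : ∀ u, d < u → u < d + m → T u > T (d + m)
      · rw [if_pos hR, if_pos ((record_iff a m T hstep hper ha hm hdm).mp hR)]
      · rw [if_neg hR, if_neg (by
          intro hc
          exact hR ((record_iff a m T hstep hper ha hm hdm).mpr hc))]
    rw [Finset.sum_congr rfl step1]
    rw [Finset.sum_range_sub' (fun k => minT T (m - 1 + k))]
    have h4 : m - 1 + 0 = m - 1 := by omega
    have h5 : m - 1 + m = 2*m - 1 := by omega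
    rw [h4, h5, minT_two_period a m T hstep hper ha hm]
    ring
  exact_mod_cast key
end RecordCount

/-! ### The orbit count: each cyclic orbit contains exactly `a` parking functions -/

theorem orbit_count (a n : ℕ) (ha : 1 ≤ a) (hn : 1 ≤ n) [NeZero (a+n)]
    (q : Fin n → ZMod (a+n)) :
    (univ.filter fun c : ZMod (a+n) => IsAPF a (fun i => (q i + c).val + 1)).card = a := by
  have hm1 : 1 ≤ a + n := by omega
  have hstep : ∀ s, walkT q (s+1) ≥ walkT q s - 1 := by
    intro s
    have h := walkT_succ q s
    have h0 : (0:ℤ) ≤ (cntN q s : ℤ) := Int.natCast_nonneg _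
    omega
  have hper : ∀ s, walkT q (s + (a+n)) = walkT q s - a := by
    intro s
    have h := walkT_period q s
    rw [h]
    push_cast
    ring
  -- Step A: characterize membership
  have stepA : ∀ c : ZMod (a+n), IsAPF a (fun i => (q i + c).val + 1) ↔
      (∀ u, (-c).val < u → u < (-c).val + (a+n) → walkT q u > walkT q ((-c).val + (a+n))) := by
    intro c
    set d := (-c).val with hd
    rw [isAPF_iff]
    have htriv : ∀ i : Fin n, 1 ≤ (fun i => (q i + c).val + 1) i := fun i => Nat.le_add_left 1 _
    rw [and_iff_right htriv]
    have hcond : ∀ i : Fin n,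
        ((i:ℕ) < (univ.filter fun j => (q j + c).val + 1 ≤ a + (i:ℕ)).card
          ↔ walkT q (d + (a + (i:ℕ))) > walkT q (d + (a+n))) := by
      intro i
      have hi : (i:ℕ) < n := i.isLt
      have hset : (univ.filter fun j => (q j + c).val + 1 ≤ a + (i:ℕ))
          = (univ.filter fun j : Fin n => (q j + c).val ≤ a - 1 + (i:ℕ)) := by
        apply Finset.filter_congr
        intro j _
        constructor <;> intro h <;> omega
      rw [hset, card_window q c (a - 1 + (i:ℕ)) (by omega)]
      have hw1 : a - 1 + (i:ℕ) + 1 = a + (i:ℕ) := by omega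
      rw [hw1]
      have hkey : ((∑ t ∈ range (a + (i:ℕ)), cntN q (d + t) : ℕ) : ℤ)
          = walkT q (d + (a + (i:ℕ))) - walkT q d + (a + (i:ℕ)) := by
        rw [Nat.cast_sum]
        exact sum_window q d (a + (i:ℕ))
      have hperd := hper d
      constructor
      · intro h
        have : ((i:ℕ) : ℤ) < ((∑ t ∈ range (a + (i:ℕ)), cntN q (d + t) : ℕ) : ℤ) := by
          exact_mod_cast h
        rw [hkey] at this
        omega
      · intro h
        have : ((i:ℕ) : ℤ) < ((∑ t ∈ range (a + (i:ℕ)), cntN q (d + t) : ℕ) : ℤ) := by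
          rw [hkey]
          push_cast at h
          omega
        exact_mod_cast this
    constructor
    · intro hAll u hu1 hu2
      rcases Nat.lt_or_ge u (d + a) with h | h
      · -- use step bound
        have h1 : walkT q (d + (u - d)) ≥ walkT q d - (u - d : ℕ) := walkT_ge q d (u - d)
        have h2 : d + (u - d) = u := by omega
        rw [h2] at h1
        have hperd := hper d
        have : ((u - d : ℕ) : ℤ) ≤ (a : ℤ) - 1 := by
          have : (u - d : ℕ) ≤ a - 1 := by omega
          have h4 : (1:ℕ) ≤ a := ha
          push_cast [Nat.cast_sub h4] at this ⊢
          omega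
        omega
      · have hi : u - d - a < n := by omega
        have := (hcond ⟨u - d - a, hi⟩).mp (hAll ⟨u - d - a, hi⟩)
        have h2 : d + (a + (u - d - a)) = u := by omega
        rw [h2] at this
        exact this
    · intro hR i
      rw [hcond i]
      exact hR (d + (a + (i:ℕ))) (by omega) (by have := i.isLt; omega)
  -- Step B: transport to records of the walk
  classical
  have hbij : (univ.filter fun c : ZMod (a+n) => IsAPF a (fun i => (q i + c).val + 1)).card
      = ((range (a+n)).filter fun d =>
          ∀ u, d < u → u < d + (a+n) → walkT q u > walkT q (d + (a+n))).card := by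
    refine Finset.card_bij' (fun c _ => (-c).val) (fun d _ => -((d : ℕ) : ZMod (a+n))) ?_ ?_ ?_ ?_
    · intro c hc
      simp only [Finset.mem_filter, Finset.mem_univ, true_and] at hc
      simp only [Finset.mem_filter, Finset.mem_range]
      exact ⟨ZMod.val_lt _, (stepA c).mp hc⟩
    · intro d hd
      simp only [Finset.mem_filter, Finset.mem_range] at hd
      simp only [Finset.mem_filter, Finset.mem_univ, true_and]
      rw [stepA]
      have hv : (-(-((d:ℕ) : ZMod (a+n)))).val = d := by
        rw [neg_neg, ZMod.val_cast_of_lt hd.1]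
      rw [hv]
      exact hd.2
    · intro c _
      rw [ZMod.natCast_val, ZMod.cast_id, neg_neg]
    · intro d hd
      simp only [Finset.mem_filter, Finset.mem_range] at hd
      rw [neg_neg, ZMod.val_cast_of_lt hd.1]
  rw [hbij]
  exact record_count a (a+n) (walkT q) hstep hper ha hm1

/-! ### The main count -/

theorem card_pfFinset (a n : ℕ) (ha : 1 ≤ a) (hn : 1 ≤ n) :
    (pfFinset a n).card = a * (a + n) ^ (n - 1) := by
  haveI : NeZero (a + n) := ⟨by omega⟩
  classical
  -- transport to the `ZMod (a+n)` world
  have hcard1 : (pfFinset a n).card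
      = (univ.filter fun q : Fin n → ZMod (a+n) => IsAPF a (fun i => (q i).val + 1)).card := by
    refine Finset.card_bij' (fun p _ => fun i => ((p i - 1 : ℕ) : ZMod (a+n)))
      (fun q _ => fun i => (q i).val + 1) ?_ ?_ ?_ ?_
    · intro p hp
      simp only [pfFinset, Finset.mem_filter, Fintype.mem_piFinset, Finset.mem_Icc] at hp
      obtain ⟨hIcc, hAPF⟩ := hp
      simp only [Finset.mem_filter, Finset.mem_univ, true_and]
      have heq : (fun i => (((p i - 1 : ℕ) : ZMod (a+n))).val + 1) = p := by
        funext i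
        have h1 := (hIcc i).1
        have h2 := (hIcc i).2
        rw [ZMod.val_cast_of_lt (by omega)]
        omega
      rw [heq]
      exact hAPF
    · intro q hq
      simp only [Finset.mem_filter, Finset.mem_univ, true_and] at hq
      simp only [pfFinset, Finset.mem_filter, Fintype.mem_piFinset, Finset.mem_Icc]
      refine ⟨fun i => ⟨by omega, ?_⟩, hq⟩
      have := ZMod.val_lt (q i)
      omega
    · intro p hp
      simp only [pfFinset, Finset.mem_filter, Fintype.mem_piFinset, Finset.mem_Icc] at hp
      obtain ⟨hIcc, _⟩ := hp
      funext i
      have h1 := (hIcc i).1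
      have h2 := (hIcc i).2
      simp only []
      rw [ZMod.val_cast_of_lt (by omega)]
      omega
    · intro q _
      funext i
      simp only [Nat.add_sub_cancel]
      rw [ZMod.natCast_val, ZMod.cast_id]
  -- double counting
  have hdouble : (a + n) * (univ.filter fun q : Fin n → ZMod (a+n) =>
      IsAPF a (fun i => (q i).val + 1)).card = (a + n) ^ n * a := by
    have hshift : ∀ c : ZMod (a+n),
        (univ.filter fun q : Fin n → ZMod (a+n) => IsAPF a (fun i => (q i).val + 1)).card
          = (univ.filter fun q : Fin n → ZMod (a+n) =>
              IsAPF a (fun i => (q i + c).val + 1)).card := by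
      intro c
      refine Finset.card_bij' (fun p _ => fun i => p i - c) (fun q _ => fun i => q i + c)
        ?_ ?_ ?_ ?_
      · intro p hp
        simp only [Finset.mem_filter, Finset.mem_univ, true_and] at hp ⊢
        have heq : (fun i => (p i - c + c).val + 1) = fun i => (p i).val + 1 := by
          funext i; rw [sub_add_cancel]
        rw [heq]; exact hp
      · intro q hq
        simp only [Finset.mem_filter, Finset.mem_univ, true_and] at hq ⊢
        exact hq
      · intro p _; funext i; simp
      · intro q _; funext i; simp
    have hsum1 : (a + n) * (univ.filter fun q : Fin n → ZMod (a+n) =>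
        IsAPF a (fun i => (q i).val + 1)).card
        = ∑ c : ZMod (a+n), (univ.filter fun q : Fin n → ZMod (a+n) =>
            IsAPF a (fun i => (q i + c).val + 1)).card := by
      have hc : ∑ _c : ZMod (a+n), (univ.filter fun q : Fin n → ZMod (a+n) =>
          IsAPF a (fun i => (q i).val + 1)).card
          = ∑ c : ZMod (a+n), (univ.filter fun q : Fin n → ZMod (a+n) =>
              IsAPF a (fun i => (q i + c).val + 1)).card :=
        Finset.sum_congr rfl (fun c _ => hshift c)
      rw [← hc, Finset.sum_const, Finset.card_univ, ZMod.card, smul_eq_mul]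
    rw [hsum1]
    have hswap : ∑ c : ZMod (a+n), (univ.filter fun q : Fin n → ZMod (a+n) =>
        IsAPF a (fun i => (q i + c).val + 1)).card
        = ∑ q : Fin n → ZMod (a+n), (univ.filter fun c : ZMod (a+n) =>
            IsAPF a (fun i => (q i + c).val + 1)).card := by
      simp only [Finset.card_filter]
      rw [Finset.sum_comm]
    rw [hswap]
    have : ∀ q : Fin n → ZMod (a+n), (univ.filter fun c : ZMod (a+n) =>
        IsAPF a (fun i => (q i + c).val + 1)).card = a := fun q => orbit_count a n ha hn q
    rw [Finset.sum_congr rfl (fun q _ => this q)]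
    rw [Finset.sum_const, Finset.card_univ, smul_eq_mul]
    congr 1
    simp [ZMod.card]
  rw [hcard1]
  have hpow : (a + n) ^ n = (a + n) ^ (n - 1) * (a + n) := by
    rw [← pow_succ, Nat.sub_add_cancel hn]
  have hfin : (a + n) * (univ.filter fun q : Fin n → ZMod (a+n) =>
      IsAPF a (fun i => (q i).val + 1)).card
      = (a + n) * (a * (a + n) ^ (n - 1)) := by
    rw [hdouble, hpow]
    ring
  have hpos : 0 < a + n := Nat.add_pos_left ha n
  generalize hX : (univ.filter fun q : Fin n → ZMod (a+n) =>
      IsAPF a (fun i => (q i).val + 1)).card = X at hfin ⊢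
  exact Nat.eq_of_mul_eq_mul_left hpos hfin

/-- Setting `x = 1` in the weighted count recovers the naive count:
`P(n,a)(1) = a (a+n)^(n-1)` for `a, n ≥ 1`. -/
theorem Ppoly_eval_one (a n : ℕ) (ha : 1 ≤ a) (hn : 1 ≤ n) :
    (Ppoly a n).eval 1 = (a : ℚ) * ((a : ℚ) + (n : ℚ)) ^ (n - 1) := by
  have h1 : (Ppoly a n).eval 1 = ((pfFinset a n).card : ℚ) := by
    rw [Ppoly, Polynomial.eval_finset_sum, Finset.card_eq_sum_ones]
    push_cast
    refine Finset.sum_congr rfl fun p _ => ?_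
    simp
  rw [h1, card_pfFinset a n ha hn]
  push_cast
  ring
end

section
/- The expectation of the area statistic over a uniformly random (ordinary) parking function of length n equals -n/2 + W_{n+1}/2, where W_m := (m!/m^{m-1})·Σ_{k=0}^{m-2} m^k/k!. -/
open Finset


/-- The Riordan–Sloane quantity `W_m = (m!/m^(m-1)) Σ_{k=0}^{m-2} m^k/k!`. -/
noncomputable def Wq (m : ℕ) : ℚ :=
  ((m.factorial : ℚ) / (m : ℚ) ^ (m - 1)) *
    ∑ k ∈ Finset.range (m - 1), (m : ℚ) ^ k / (k.factorial : ℚ)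

namespace PFAux

noncomputable def xw (x : ℚ) (k : ℕ) : ℚ := if k = 0 then 1 else x * (x + k) ^ (k - 1)

noncomputable def Iq (m : ℕ) (x y : ℚ) : ℚ :=
  ∑ k ∈ range (m + 1), (m.choose k : ℚ) * xw x k * (y + (m - k : ℕ)) ^ (m - k)

noncomputable def yw (m : ℕ) (y : ℚ) (k : ℕ) : ℚ :=
  if k = m then 1 else y * (y + (m - k : ℕ)) ^ (m - k - 1)

noncomputable def IIq (m : ℕ) (x y : ℚ) : ℚ :=
  ∑ k ∈ range (m + 1), (m.choose k : ℚ) * xw x k * yw m y k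

noncomputable def Jq (m : ℕ) (x y : ℚ) : ℚ :=
  ∑ k ∈ range (m + 1), (m.choose k : ℚ) * (x + k) ^ k * yw m y k

lemma Jq_eq (m : ℕ) (x y : ℚ) : Jq m x y = Iq m y x := by
  unfold Jq Iq
  rw [← Finset.sum_range_reflect]
  apply Finset.sum_congr rfl
  intro k hk
  rw [Finset.mem_range] at hk
  have hkm : k ≤ m := by omega
  have h0 : m + 1 - 1 - k = m - k := by omega
  rw [h0, Nat.choose_symm hkm]
  have h1 : m - (m - k) = k := by omega
  unfold yw xw
  rw [h1]
  by_cases hk0 : k = 0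
  · simp [hk0, show m - k = m by omega]
  · rw [if_neg (by omega), if_neg hk0]
    ring

lemma Iq_eq (m : ℕ) : ∀ x y : ℚ, Iq m x y = (x + y + m) ^ m := by
  induction m with
  | zero => intro x y; simp [Iq, xw]
  | succ m ih =>
    have hJ : ∀ x y : ℚ, Jq m x y = (x + y + m) ^ m := by
      intro x y; rw [Jq_eq, ih]; ring_nf
    have hII : ∀ x y : ℚ, IIq (m + 1) x y = (x + y) * (x + y + (m + 1)) ^ m := by
      intro x y
      unfold IIq
      rw [Finset.sum_range_succ']
      have split : ∀ k ∈ range (m + 1),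
          ((m + 1).choose (k + 1) : ℚ) * xw x (k + 1) * yw (m + 1) y (k + 1)
          = (m.choose (k + 1) : ℚ) * xw x (k + 1) * yw (m + 1) y (k + 1)
            + (m.choose k : ℚ) * xw x (k + 1) * yw (m + 1) y (k + 1) := by
        intro k _
        rw [Nat.choose_succ_succ']
        push_cast
        ring
      rw [Finset.sum_congr rfl split, Finset.sum_add_distrib]
      -- Group A : reattach k=0 term
      have hA : (∑ k ∈ range (m + 1), (m.choose (k + 1) : ℚ) * xw x (k + 1) * yw (m + 1) y (k + 1))
          + ((m + 1).choose 0 : ℚ) * xw x 0 * yw (m + 1) y 0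
          = y * Iq m x (y + 1) := by
        have : (∑ k ∈ range (m + 1), (m.choose (k + 1) : ℚ) * xw x (k + 1) * yw (m + 1) y (k + 1))
            + ((m + 1).choose 0 : ℚ) * xw x 0 * yw (m + 1) y 0
            = ∑ k ∈ range (m + 2), (m.choose k : ℚ) * xw x k * yw (m + 1) y k := by
          rw [Finset.sum_range_succ' (fun k => (m.choose k : ℚ) * xw x k * yw (m + 1) y k) (m + 1)]
          norm_num
        rw [this, Finset.sum_range_succ]
        rw [Nat.choose_succ_self]
        push_cast
        rw [Iq, Finset.mul_sum]
        simp only [add_zero, mul_zero, zero_mul]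
        apply Finset.sum_congr rfl
        intro k hk
        rw [Finset.mem_range] at hk
        have hkm : k ≤ m := by omega
        have h1 : m + 1 - k = (m - k) + 1 := by omega
        have h2 : m + 1 - k - 1 = m - k := by omega
        rw [yw, if_neg (by omega), h2, h1]
        push_cast
        ring
      -- Group B
      have hB : (∑ k ∈ range (m + 1), (m.choose k : ℚ) * xw x (k + 1) * yw (m + 1) y (k + 1))
          = x * Jq m (x + 1) y := by
        rw [Jq, Finset.mul_sum]
        apply Finset.sum_congr rfl
        intro k hk
        rw [Finset.mem_range] at hk
        have hkm : k ≤ m := by omega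
        have hxw : xw x (k + 1) = x * ((x + 1) + k) ^ k := by
          rw [xw, if_neg (by omega)]
          push_cast
          ring_nf
        have hyw : yw (m + 1) y (k + 1) = yw m y k := by
          unfold yw
          by_cases hkm' : k = m
          · simp [hkm']
          · rw [if_neg (by omega), if_neg hkm']
            have : m + 1 - (k + 1) = m - k := by omega
            rw [this]
        rw [hxw, hyw]
        ring
      rw [add_right_comm, hA, hB, ih, hJ]
      ring
    -- now I at m+1
    intro x y
    have key : Iq (m + 1) x y = IIq (m + 1) x y + (m + 1) * Iq m x (y + 1) := by
      unfold Iq IIq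
      rw [Finset.mul_sum]
      rw [Finset.sum_range_succ
            (fun k => ((m+1).choose k : ℚ) * xw x k * (y + ((m+1-k:ℕ):ℚ)) ^ (m+1-k)) (m+1),
          Finset.sum_range_succ
            (fun k => ((m+1).choose k : ℚ) * xw x k * yw (m+1) y k) (m+1)]
      have last_eq : ((m + 1).choose (m + 1) : ℚ) * xw x (m + 1) *
            (y + ((m + 1 - (m + 1) : ℕ) : ℚ)) ^ (m + 1 - (m + 1))
          = ((m + 1).choose (m + 1) : ℚ) * xw x (m + 1) * yw (m + 1) y (m + 1) := by
        simp [yw]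
      rw [last_eq, add_right_comm]
      apply add_left_inj _ |>.mpr
      rw [← Finset.sum_add_distrib]
      apply Finset.sum_congr rfl
      intro k hk
      rw [Finset.mem_range] at hk
      have hkm : k ≤ m := by omega
      have h1 : m + 1 - k = (m - k) + 1 := by omega
      have hyw : yw (m + 1) y k = y * (y + ((m + 1 - k : ℕ) : ℚ)) ^ (m - k) := by
        rw [yw, if_neg (by omega)]
        have : m + 1 - k - 1 = m - k := by omega
        rw [this]
      have hch : ((m + 1).choose k : ℚ) * ((m + 1 - k : ℕ) : ℚ) = (m + 1) * (m.choose k : ℚ) := by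
        have h3 : (m + 1).choose k * (m + 1 - k) = (m + 1) * m.choose k := by
          rw [← Nat.choose_succ_right_eq]
          exact (Nat.add_one_mul_choose_eq m k).symm
        exact_mod_cast congrArg (Nat.cast : ℕ → ℚ) h3
      have hpow : (y + ((m + 1 - k : ℕ) : ℚ)) ^ (m + 1 - k)
          = (y + ((m + 1 - k : ℕ) : ℚ)) * (y + ((m + 1 - k : ℕ) : ℚ)) ^ (m - k) := by
        rw [h1, pow_succ]
        ring
      have hcast : ((m + 1 - k : ℕ) : ℚ) = ((m - k : ℕ) : ℚ) + 1 := by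
        rw [h1]; push_cast; ring
      rw [hyw, hpow]
      have : ((m+1).choose k : ℚ) * xw x k * ((y + ((m+1-k:ℕ):ℚ)) * (y + ((m+1-k:ℕ):ℚ)) ^ (m-k))
          = ((m+1).choose k : ℚ) * xw x k * y * (y + ((m+1-k:ℕ):ℚ)) ^ (m-k)
            + (((m+1).choose k : ℚ) * ((m+1-k:ℕ):ℚ)) * xw x k * (y + ((m+1-k:ℕ):ℚ)) ^ (m-k) := by
        ring
      rw [this, hch, hcast]
      ring
    rw [key, hII, ih]
    have e1 : x + (y + 1) + (m:ℚ) = x + y + ((m:ℚ) + 1) := by ring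
    have e2 : ((m + 1 : ℕ) : ℚ) = (m:ℚ) + 1 := by push_cast; ring
    rw [e1, e2, pow_succ]
    ring

noncomputable def Fw (i : ℕ) : ℚ := ((i + 1 : ℕ) : ℚ) ^ (i - 1)

lemma yw_one (m k : ℕ) (hk : k ≤ m) : yw m 1 k = Fw (m - k) := by
  unfold yw Fw
  by_cases h : k = m
  · simp [h]
  · rw [if_neg h]
    have : m - k - 1 + 1 = m - k := by omega
    push_cast
    ring_nf

lemma Jq_one (m : ℕ) (x : ℚ) :
    ∑ k ∈ range (m + 1), (m.choose k : ℚ) * (x + k) ^ k * Fw (m - k) = (x + 1 + m) ^ m := by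
  have : ∑ k ∈ range (m + 1), (m.choose k : ℚ) * (x + k) ^ k * Fw (m - k) = Jq m x 1 := by
    apply Finset.sum_congr rfl
    intro k hk
    rw [Finset.mem_range] at hk
    rw [yw_one m k (by omega)]
  rw [this, Jq_eq, Iq_eq]
  ring_nf

noncomputable def Bq (m : ℕ) (x : ℚ) : ℚ :=
  ∑ k ∈ range (m + 1), (m.choose k : ℚ) * (x + k) ^ (k + 1) * Fw (m - k)

lemma Bq_succ (m : ℕ) (x : ℚ) :
    Bq (m + 1) x = x * (x + 1 + (m + 1)) ^ (m + 1) + (m + 1) * Bq m (x + 1) := by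
  unfold Bq
  have split : ∀ k ∈ range (m + 2),
      ((m+1).choose k : ℚ) * (x + k) ^ (k + 1) * Fw (m + 1 - k)
      = x * (((m+1).choose k : ℚ) * (x + k) ^ k * Fw (m + 1 - k))
        + ((m+1).choose k : ℚ) * (k : ℚ) * (x + k) ^ k * Fw (m + 1 - k) := by
    intro k _
    rw [pow_succ]
    ring
  rw [Finset.sum_congr rfl split, Finset.sum_add_distrib, ← Finset.mul_sum]
  have h1 : ∑ k ∈ range (m + 2), ((m+1).choose k : ℚ) * (x + k) ^ k * Fw (m + 1 - k)
      = (x + 1 + (m + 1)) ^ (m + 1) := by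
    rw [Jq_one (m + 1) x]
    push_cast
    ring_nf
  rw [h1]
  congr 1
  rw [Finset.sum_range_succ']
  have h0 : ((m+1).choose 0 : ℚ) * ((0:ℕ) : ℚ) * (x + ((0:ℕ):ℚ)) ^ 0 * Fw (m + 1 - 0) = 0 := by
    norm_num
  rw [h0, add_zero, Finset.mul_sum]
  apply Finset.sum_congr rfl
  intro k hk
  rw [Finset.mem_range] at hk
  have h3 : (m + 1) * m.choose k = (m+1).choose (k+1) * (k+1) := Nat.add_one_mul_choose_eq m k
  have hch : ((m+1).choose (k+1) : ℚ) * ((k:ℚ) + 1) = ((m:ℚ) + 1) * (m.choose k : ℚ) := by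
    exact_mod_cast h3.symm
  have hFw : m + 1 - (k + 1) = m - k := by omega
  have hx : (x + ((k+1 : ℕ) : ℚ)) = (x + 1) + (k : ℚ) := by push_cast; ring
  rw [hFw, hx]
  push_cast
  linear_combination (x + 1 + (k:ℚ)) ^ (k+1) * Fw (m - k) * hch

lemma Bq_eq (m : ℕ) : ∀ x : ℚ,
    Bq m x = ∑ j ∈ range (m + 1), (m.descFactorial j : ℚ) * (x + j) * (x + (m + 1 : ℕ)) ^ (m - j) := by
  induction m with
  | zero => intro x; simp [Bq, Fw]
  | succ m ih =>
    intro x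
    rw [Bq_succ, ih (x + 1)]
    rw [Finset.sum_range_succ' (fun j => ((m+1).descFactorial j : ℚ) * (x + j) *
          (x + ((m + 2 : ℕ) : ℚ)) ^ (m + 1 - j)) (m + 1)]
    have h0 : ((m+1).descFactorial 0 : ℚ) * (x + ((0:ℕ):ℚ)) * (x + ((m+2:ℕ):ℚ)) ^ (m + 1 - 0)
        = x * (x + 1 + ((m:ℚ) + 1)) ^ (m + 1) := by
      simp [Nat.descFactorial]
      left
      push_cast
      ring
    rw [h0]
    rw [add_comm]
    congr 1
    rw [Finset.mul_sum]
    apply Finset.sum_congr rfl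
    intro j hj
    rw [Finset.mem_range] at hj
    have hd : ((m+1).descFactorial (j+1) : ℚ) = ((m:ℚ)+1) * (m.descFactorial j : ℚ) := by
      rw [Nat.succ_descFactorial_succ]
      push_cast
      ring
    have he : m + 1 - (j + 1) = m - j := by omega
    rw [hd, he]
    push_cast
    ring

lemma telescope (m : ℕ) :
    ∑ j ∈ range (m + 1), (m.descFactorial j : ℚ) * ((j:ℚ) + 2) * ((m:ℚ) + 2) ^ (m - j)
      = ((m:ℚ) + 2) ^ (m + 1) := by
  have key : ∀ r, r ≤ m + 1 →
      ∑ j ∈ range r, (m.descFactorial j : ℚ) * ((j:ℚ) + 2) * ((m:ℚ) + 2) ^ (m - j)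
        = ((m:ℚ) + 2) ^ (m + 1) - (m.descFactorial r : ℚ) * ((m:ℚ) + 2) ^ (m + 1 - r) := by
    intro r
    induction r with
    | zero => intro _; simp
    | succ r ihr =>
      intro hr
      rw [Finset.sum_range_succ, ihr (by omega)]
      have hd : (m.descFactorial (r+1) : ℚ) = ((m - r : ℕ) : ℚ) * (m.descFactorial r : ℚ) := by
        rw [Nat.descFactorial_succ]; push_cast; ring
      have hc : ((m - r : ℕ) : ℚ) = (m:ℚ) - (r:ℚ) := by
        have : r ≤ m := by omega
        push_cast [this]
        ring
      have he : m + 1 - r = (m - r) + 1 := by omega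
      have he2 : m + 1 - (r + 1) = m - r := by omega
      rw [hd, hc, he, he2, pow_succ]
      ring
  have := key (m + 1) (le_refl _)
  rw [this]
  have hz : (m.descFactorial (m+1) : ℚ) = 0 := by
    rw [Nat.descFactorial_eq_zero_iff_lt.mpr (by omega)]
    norm_num
  rw [hz]
  ring

end PFAux


namespace PFAux

def cnt {n : ℕ} (p : Fin n → ℕ) (t : ℕ) : ℕ := ∑ i, if p i ≤ t then 1 else 0

lemma cnt_le {n : ℕ} (p : Fin n → ℕ) (t : ℕ) : cnt p t ≤ n := by
  calc cnt p t ≤ ∑ _i : Fin n, 1 := Finset.sum_le_sum (by intro i _; split <;> omega)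
  _ = n := by simp

lemma cnt_mono {n : ℕ} (p : Fin n → ℕ) {t t' : ℕ} (h : t ≤ t') : cnt p t ≤ cnt p t' := by
  apply Finset.sum_le_sum
  intro i _
  by_cases hp : p i ≤ t
  · rw [if_pos hp, if_pos (le_trans hp h)]
  · rw [if_neg hp]; omega

lemma cnt_eq_card {n : ℕ} (p : Fin n → ℕ) (t : ℕ) :
    cnt p t = (Finset.univ.filter (fun i => p i ≤ t)).card := by
  rw [Finset.card_filter]; rfl

/-- parking functions, defined via the counting criterion -/
def PFcond (n : ℕ) (p : Fin n → ℕ) : Prop := ∀ t ∈ Finset.range (n+1), t ≤ cnt p t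

instance (n : ℕ) : DecidablePred (PFcond n) := fun _ => Finset.decidableDforallFinset

def PF (n : ℕ) : Finset (Fin n → ℕ) :=
  (Fintype.piFinset fun _ => Finset.Icc 1 n).filter (PFcond n)

lemma sum_ite_eq_countP (q : ℕ → Prop) [DecidablePred q] :
    ∀ l : List ℕ, (l.map fun a => if q a then 1 else 0).sum = l.countP (fun a => decide (q a))
  | [] => by simp
  | a :: l => by
    simp [List.countP_cons, sum_ite_eq_countP q l]
    by_cases h : q a <;> simp [h] <;> omega

lemma cnt_eq_countP {n : ℕ} (p : Fin n → ℕ) (t : ℕ) :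
    cnt p t = (List.ofFn p).countP (fun a => decide (a ≤ t)) := by
  rw [← sum_ite_eq_countP (fun a => a ≤ t) (List.ofFn p)]
  rw [List.ofFn_eq_map, List.map_map]
  rw [cnt, Fin.sum_univ_def]
  rfl

lemma sorted_getD_le_iff : ∀ (l : List ℕ), l.Pairwise (· ≤ ·) → ∀ i t, i < l.length →
    (l.getD i 0 ≤ t ↔ i < l.countP (fun a => decide (a ≤ t)))
  | [], _, i, t, h => by simp at h
  | a :: l, hs, i, t, h => by
    rw [List.pairwise_cons] at hs
    match i with
    | 0 =>
      simp only [List.getD_cons_zero, List.countP_cons]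
      constructor
      · intro ha
        simp [ha]
      · intro hpos
        by_contra hat
        have h0 : l.countP (fun b => decide (b ≤ t)) = 0 := by
          apply List.countP_eq_zero.mpr
          intro b hb
          have := hs.1 b hb
          simp only [decide_eq_true_eq]
          omega
        simp [h0, hat] at hpos
    | (i+1) =>
      simp only [List.getD_cons_succ, List.countP_cons]
      rw [sorted_getD_le_iff l hs.2 i t (by simpa using Nat.lt_of_succ_lt_succ h)]
      by_cases hat : a ≤ t
      · simp [hat]
      · have h0 : l.countP (fun b => decide (b ≤ t)) = 0 := by
          apply List.countP_eq_zero.mpr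
          intro b hb
          have := hs.1 b hb
          simp only [decide_eq_true_eq]
          omega
        simp [h0, hat]

lemma sortPF_length {n : ℕ} (p : Fin n → ℕ) : (sortPF p).length = n := by
  rw [sortPF]
  rw [Multiset.length_sort]
  simp

lemma sortPF_sorted {n : ℕ} (p : Fin n → ℕ) : (sortPF p).Pairwise (· ≤ ·) :=
  Multiset.pairwise_sort _ _

lemma sortPF_countP {n : ℕ} (p : Fin n → ℕ) (t : ℕ) :
    (sortPF p).countP (fun a => decide (a ≤ t)) = cnt p t := by
  rw [cnt_eq_countP]
  have : (↑(sortPF p) : Multiset ℕ) = ↑(List.ofFn p) := Multiset.sort_eq _ _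
  have hperm : (sortPF p).Perm (List.ofFn p) := Quotient.exact this
  exact hperm.countP_eq _

lemma pfFinset_eq_PF (n : ℕ) : pfFinset 1 n = PF n := by
  ext p
  rw [pfFinset, PF, Finset.mem_filter, Finset.mem_filter, IsAPF]
  unfold PFcond
  constructor
  · rintro ⟨hpi, hge, hsort⟩
    have hcnt : ∀ t ∈ Finset.range (n+1), t ≤ cnt p t := by
      intro t ht
      rw [Finset.mem_range] at ht
      match t with
      | 0 => omega
      | (i+1) =>
        have hi : i < n := by omega
        have hkey := (sorted_getD_le_iff (sortPF p) (sortPF_sorted p) i (i+1)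
          (by rw [sortPF_length]; omega)).mp
        rw [sortPF_countP] at hkey
        have hx := hsort ⟨i, hi⟩
        simp only [Fin.val_mk] at hx
        have h2 := hkey (by omega)
        omega
    have hle : ∀ i, p i ≤ n := by
      have hcn : cnt p n = n := le_antisymm (cnt_le p n) (hcnt n (by simp))
      rw [cnt_eq_card] at hcn
      have : Finset.univ.filter (fun i => p i ≤ n) = Finset.univ := by
        apply Finset.eq_univ_of_card
        rw [hcn]; simp
      intro i
      have := Finset.mem_filter.mp (this ▸ Finset.mem_univ i)
      exact this.2
    refine ⟨?_, hcnt⟩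
    rw [Fintype.mem_piFinset]
    intro i
    rw [Finset.mem_Icc]
    exact ⟨hge i, hle i⟩
  · rintro ⟨hpi, hcnt⟩
    rw [Fintype.mem_piFinset] at hpi
    have hmem : ∀ i, 1 ≤ p i ∧ p i ≤ n := by
      intro i
      have := hpi i
      rw [Finset.mem_Icc] at this
      exact this
    refine ⟨?_, fun i => (hmem i).1, ?_⟩
    · rw [Fintype.mem_piFinset]
      intro i
      rw [Finset.mem_Icc]
      exact ⟨(hmem i).1, by have := (hmem i).2; omega⟩
    · intro i
      have hi : (i : ℕ) < n := i.isLt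
      rw [show (1 : ℕ) + (i : ℕ) = (i : ℕ) + 1 by omega]
      apply (sorted_getD_le_iff (sortPF p) (sortPF_sorted p) i ((i : ℕ)+1)
          (by rw [sortPF_length]; omega)).mpr
      rw [sortPF_countP]
      have := hcnt ((i : ℕ) + 1) (by rw [Finset.mem_range]; omega)
      omega

end PFAux

namespace PFAux

lemma cnt_comp {n : ℕ} (p : Fin n → ℕ) (σ : Equiv.Perm (Fin n)) (t : ℕ) :
    cnt (p ∘ σ) t = cnt p t :=
  Fintype.sum_equiv σ _ _ (fun _ => rfl)

lemma PF_comp_mem {n : ℕ} (σ : Equiv.Perm (Fin n)) {p : Fin n → ℕ} (hp : p ∈ PF n) :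
    p ∘ σ ∈ PF n := by
  rw [PF, Finset.mem_filter] at hp ⊢
  refine ⟨?_, ?_⟩
  · rw [Fintype.mem_piFinset]
    intro i
    exact Fintype.mem_piFinset.mp hp.1 (σ i)
  · intro t ht
    rw [cnt_comp]
    exact hp.2 t ht

lemma sum_PF_coord (N : ℕ) (i : Fin (N+1)) :
    ∑ p ∈ PF (N+1), (p i : ℚ) = ∑ p ∈ PF (N+1), (p 0 : ℚ) := by
  apply Finset.sum_nbij' (i := fun p => p ∘ (Equiv.swap 0 i)) (j := fun p => p ∘ (Equiv.swap 0 i))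
  · intro p hp; exact PF_comp_mem _ hp
  · intro p hp; exact PF_comp_mem _ hp
  · intro p _; funext j; simp [Function.comp, Equiv.swap_apply_self]
  · intro p _; funext j; simp [Function.comp, Equiv.swap_apply_self]
  · intro p _
    simp [Function.comp, Equiv.swap_apply_left]

lemma sum_entries (N : ℕ) :
    ∑ p ∈ PF (N+1), (∑ j, (p j : ℚ)) = (N+1 : ℚ) * ∑ p ∈ PF (N+1), (p 0 : ℚ) := by
  rw [Finset.sum_comm]
  have : ∀ j : Fin (N+1), ∑ p ∈ PF (N+1), (p j : ℚ) = ∑ p ∈ PF (N+1), (p 0 : ℚ) :=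
    fun j => sum_PF_coord N j
  rw [Finset.sum_congr rfl (fun j _ => this j)]
  rw [Finset.sum_const]
  simp [mul_comm]

lemma exists_cnt_lt {n : ℕ} (p : Fin n → ℕ) : ∃ t, cnt p t < t :=
  ⟨n+1, by have := cnt_le p (n+1); omega⟩

def ep {n : ℕ} (p : Fin n → ℕ) : ℕ := Nat.find (exists_cnt_lt p)

lemma ep_spec {n : ℕ} (p : Fin n → ℕ) : cnt p (ep p) < ep p := Nat.find_spec (exists_cnt_lt p)

lemma ep_min {n : ℕ} (p : Fin n → ℕ) {t : ℕ} (ht : t < ep p) : t ≤ cnt p t := by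
  have := Nat.find_min (exists_cnt_lt p) ht
  omega

lemma ep_le {n : ℕ} (p : Fin n → ℕ) : ep p ≤ n + 1 :=
  Nat.find_min' _ (by have := cnt_le p (n+1); omega)

lemma ep_pos {n : ℕ} (p : Fin n → ℕ) : 1 ≤ ep p := by
  by_contra h
  have h0 : ep p = 0 := by omega
  have := ep_spec p
  omega

def OKcond (N : ℕ) (p : Fin N → ℕ) : Prop := ∀ t ∈ Finset.range (N+2), t ≤ cnt p t + 1

instance (N : ℕ) : DecidablePred (OKcond N) := fun _ => Finset.decidableDforallFinset

def OK (N : ℕ) : Finset (Fin N → ℕ) :=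
  (Fintype.piFinset fun _ => Finset.Icc 1 (N+1)).filter (OKcond N)

lemma cnt_cons {N : ℕ} (s : ℕ) (p' : Fin N → ℕ) (t : ℕ) :
    cnt (Fin.cons s p') t = (if s ≤ t then 1 else 0) + cnt p' t := by
  rw [cnt, Fin.sum_univ_succ]
  simp [cnt, Fin.cons_succ]

lemma stepA (N : ℕ) (g : (Fin (N+1) → ℕ) → ℚ) :
    ∑ p ∈ PF (N+1), g p
      = ∑ p' ∈ OK N, ∑ s ∈ Finset.Icc 1 (ep p'), g (Fin.cons s p') := by
  rw [← Finset.sum_sigma (OK N) (fun p' => Finset.Icc 1 (ep p'))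
      (fun x => g (Fin.cons x.2 x.1))]
  apply Finset.sum_nbij' (i := fun p => (⟨Fin.tail p, p 0⟩ : Σ _ : Fin N → ℕ, ℕ))
    (j := fun x => Fin.cons x.2 x.1)
  · -- maps into sigma
    intro p hp
    rw [PF, Finset.mem_filter] at hp
    obtain ⟨hpi, hcnt⟩ := hp
    rw [Fintype.mem_piFinset] at hpi
    have hcons : Fin.cons (p 0) (Fin.tail p) = p := Fin.cons_self_tail p
    rw [Finset.mem_sigma]
    dsimp only
    have hcc : ∀ t : ℕ, cnt p t = (if p 0 ≤ t then 1 else 0) + cnt (Fin.tail p) t := by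
      intro t
      conv_lhs => rw [← hcons]
      exact cnt_cons _ _ _
    constructor
    · rw [OK, Finset.mem_filter]
      constructor
      · rw [Fintype.mem_piFinset]
        intro i
        exact hpi i.succ
      · intro t ht
        rw [Finset.mem_range] at ht
        have h1 := hcnt t (by rw [Finset.mem_range]; omega)
        have h2 := hcc t
        split at h2 <;> omega
    · rw [Finset.mem_Icc]
      have h1 : 1 ≤ p 0 ∧ p 0 ≤ N + 1 := by
        have := hpi 0
        rw [Finset.mem_Icc] at this
        exact this
      refine ⟨h1.1, ?_⟩
      by_contra hgt
      push_neg at hgt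
      have hje := ep_le (Fin.tail p)
      have hsp := ep_spec (Fin.tail p)
      have h2 := hcc (ep (Fin.tail p))
      rw [if_neg (by omega)] at h2
      have h3 := hcnt (ep (Fin.tail p)) (by rw [Finset.mem_range]; omega)
      omega
  · -- j maps into PF
    rintro ⟨p', s⟩ hx
    rw [Finset.mem_sigma] at hx
    dsimp only at hx ⊢
    obtain ⟨hp', hs⟩ := hx
    rw [Finset.mem_Icc] at hs
    rw [OK, Finset.mem_filter] at hp'
    obtain ⟨hpi', hok⟩ := hp'
    rw [Fintype.mem_piFinset] at hpi'
    have hse : ep p' ≤ N + 1 := ep_le p'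
    rw [PF, Finset.mem_filter]
    constructor
    · rw [Fintype.mem_piFinset]
      intro i
      induction i using Fin.cases with
      | zero =>
        rw [Fin.cons_zero, Finset.mem_Icc]
        exact ⟨hs.1, by omega⟩
      | succ i =>
        rw [Fin.cons_succ]
        exact hpi' i
    · intro t ht
      rw [Finset.mem_range] at ht
      rw [cnt_cons]
      by_cases hst : s ≤ t
      · rw [if_pos hst]
        have := hok t (by rw [Finset.mem_range]; omega)
        omega
      · rw [if_neg hst]
        have h5 : t < ep p' := by omega
        have := ep_min p' h5
        omega
  · intro p _
    exact Fin.cons_self_tail p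
  · rintro ⟨p', s⟩ _
    simp [Fin.tail_cons]
  · intro p _
    rw [Fin.cons_self_tail p]

end PFAux

namespace PFAux

lemma sum_S_reindex {N k : ℕ} (S : Finset (Fin N)) (hS : S.card = k) (f : Fin N → ℕ) :
    ∑ i ∈ S, f i = ∑ j : Fin k, f (S.orderIsoOfFin hS j) := by
  rw [← Finset.sum_attach S f, ← Finset.univ_eq_attach]
  exact (Fintype.sum_equiv (S.orderIsoOfFin hS).toEquiv
    (fun j => f (S.orderIsoOfFin hS j)) (fun x => f x.1) (fun j => rfl)).symm

lemma sum_split_S {N k m : ℕ} (S : Finset (Fin N)) (hS : S.card = k) (hSc : Sᶜ.card = m)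
    (f : Fin N → ℕ) :
    ∑ i, f i = (∑ j : Fin k, f (S.orderIsoOfFin hS j))
      + (∑ j : Fin m, f (Sᶜ.orderIsoOfFin hSc j)) := by
  rw [← Finset.sum_add_sum_compl S f, sum_S_reindex S hS f, sum_S_reindex Sᶜ hSc f]

def mrg {N : ℕ} (k : ℕ) (S : Finset (Fin N)) (hS : S.card = k) (hSc : Sᶜ.card = N - k)
    (q : Fin k → ℕ) (r : Fin (N-k) → ℕ) : Fin N → ℕ :=
  fun i => if h : i ∈ S then q ((S.orderIsoOfFin hS).symm ⟨i, h⟩)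
           else (k+1) + r ((Sᶜ.orderIsoOfFin hSc).symm ⟨i, Finset.mem_compl.mpr h⟩)

lemma mrg_on_S {N k : ℕ} {S : Finset (Fin N)} (hS : S.card = k) (hSc : Sᶜ.card = N - k)
    (q : Fin k → ℕ) (r : Fin (N-k) → ℕ) (j : Fin k) :
    mrg k S hS hSc q r ((S.orderIsoOfFin hS) j) = q j := by
  rw [mrg, dif_pos (((S.orderIsoOfFin hS) j).2)]
  congr
  exact_mod_cast (S.orderIsoOfFin hS).symm_apply_apply j

lemma mrg_on_Sc {N k : ℕ} {S : Finset (Fin N)} (hS : S.card = k) (hSc : Sᶜ.card = N - k)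
    (q : Fin k → ℕ) (r : Fin (N-k) → ℕ) (j : Fin (N-k)) :
    mrg k S hS hSc q r ((Sᶜ.orderIsoOfFin hSc) j) = (k+1) + r j := by
  have hnot : ¬ (((Sᶜ.orderIsoOfFin hSc) j : Fin N) ∈ S) :=
    Finset.mem_compl.mp ((Sᶜ.orderIsoOfFin hSc) j).2
  rw [mrg, dif_neg hnot]
  congr
  exact_mod_cast (Sᶜ.orderIsoOfFin hSc).symm_apply_apply j

lemma cnt_mrg {N k : ℕ} {S : Finset (Fin N)} (hS : S.card = k) (hSc : Sᶜ.card = N - k)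
    (q : Fin k → ℕ) (r : Fin (N-k) → ℕ) (t : ℕ) :
    cnt (mrg k S hS hSc q r) t = cnt q t + cnt (fun j => k + 1 + r j) t := by
  rw [cnt, sum_split_S S hS hSc]
  congr 1
  · apply Finset.sum_congr rfl
    intro j _
    rw [mrg_on_S]
  · apply Finset.sum_congr rfl
    intro j _
    rw [mrg_on_Sc]

lemma cnt_mrg_lo {N k : ℕ} {S : Finset (Fin N)} (hS : S.card = k) (hSc : Sᶜ.card = N - k)
    (q : Fin k → ℕ) (r : Fin (N-k) → ℕ) {t : ℕ} (ht : t ≤ k) :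
    cnt (mrg k S hS hSc q r) t = cnt q t := by
  rw [cnt_mrg]
  have : cnt (fun j => k + 1 + r j) t = 0 := by
    rw [cnt]
    apply Finset.sum_eq_zero
    intro j _
    rw [if_neg (by omega)]
  omega

lemma cnt_mrg_hi {N k : ℕ} {S : Finset (Fin N)} (hS : S.card = k) (hSc : Sᶜ.card = N - k)
    (q : Fin k → ℕ) (r : Fin (N-k) → ℕ) (hq : ∀ j, q j ≤ k) {t : ℕ} (ht : k + 1 ≤ t) :
    cnt (mrg k S hS hSc q r) t = k + cnt r (t - (k+1)) := by
  rw [cnt_mrg]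
  have h1 : cnt q t = k := by
    rw [cnt]
    rw [Finset.sum_congr rfl (fun j _ => if_pos (by have := hq j; omega))]
    simp
  have h2 : cnt (fun j => k + 1 + r j) t = cnt r (t - (k+1)) := by
    rw [cnt, cnt]
    apply Finset.sum_congr rfl
    intro j _
    congr 1
    simp only [eq_iff_iff]
    omega
  omega

end PFAux

namespace PFAux

lemma ep_eq_iff {n : ℕ} (p : Fin n → ℕ) (j : ℕ) :
    ep p = j ↔ (cnt p j < j ∧ ∀ t, t < j → t ≤ cnt p t) := by
  rw [ep, Nat.find_eq_iff]
  constructor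
  · rintro ⟨h1, h2⟩
    exact ⟨h1, fun t ht => by have := h2 t ht; omega⟩
  · rintro ⟨h1, h2⟩
    exact ⟨h1, fun t ht => by have := h2 t ht; omega⟩

lemma card_fiber_S {N k : ℕ} (hk : k ≤ N) (S : Finset (Fin N)) (hS : S.card = k) :
    ((OK N).filter
        (fun p' => ep p' = k + 1 ∧ Finset.univ.filter (fun i => p' i ≤ k) = S)).card
      = ((PF k) ×ˢ (PF (N-k))).card := by
  have hSc : Sᶜ.card = N - k := by
    rw [Finset.card_compl, hS]
    simp
  apply Finset.card_nbij'
    (i := fun p' => (fun j => p' (S.orderIsoOfFin hS j),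
                     fun j => p' (Sᶜ.orderIsoOfFin hSc j) - (k+1)))
    (j := fun qr => mrg k S hS hSc qr.1 qr.2)
  · -- forward membership
    intro p' hp'
    rw [Finset.mem_coe] at hp' ⊢
    rw [Finset.mem_filter] at hp'
    obtain ⟨hOK, hep, hSf⟩ := hp'
    rw [OK, Finset.mem_filter] at hOK
    obtain ⟨hpi, hok⟩ := hOK
    rw [Fintype.mem_piFinset] at hpi
    have hv : ∀ i, 1 ≤ p' i ∧ p' i ≤ N + 1 := by
      intro i; have := hpi i; rwa [Finset.mem_Icc] at this
    have hmemS : ∀ i, i ∈ S ↔ p' i ≤ k := by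
      intro i
      rw [← hSf, Finset.mem_filter]
      simp
    have hepk := (ep_eq_iff p' (k+1)).mp hep
    have hne : ∀ i, p' i ≠ k + 1 := by
      intro i hi
      have hsub : Finset.univ.filter (fun i => p' i ≤ k)
          ⊆ Finset.univ.filter (fun i => p' i ≤ k + 1) := by
        intro x hx
        rw [Finset.mem_filter] at hx ⊢
        exact ⟨hx.1, by omega⟩
      have hcard : (Finset.univ.filter (fun i => p' i ≤ k + 1)).card
          ≤ (Finset.univ.filter (fun i => p' i ≤ k)).card := by
        rw [← cnt_eq_card, ← cnt_eq_card]
        have h1 := hepk.1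
        have h2 : k ≤ cnt p' k := by
          rcases Nat.eq_zero_or_pos k with hk0 | hk0
          · omega
          · exact hepk.2 k (by omega)
        omega
      have heq := Finset.eq_of_subset_of_card_le hsub hcard
      have : i ∈ Finset.univ.filter (fun i => p' i ≤ k + 1) := by
        rw [Finset.mem_filter]; exact ⟨Finset.mem_univ i, by omega⟩
      rw [← heq, Finset.mem_filter] at this
      have := this.2
      omega
    -- cnt of q
    have hcntq : ∀ t, t ≤ k → cnt (fun j => p' (S.orderIsoOfFin hS j)) t = cnt p' t := by
      intro t ht
      rw [cnt, cnt, sum_split_S S hS hSc]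
      have h2 : ∑ j : Fin (N-k), (if p' (Sᶜ.orderIsoOfFin hSc j) ≤ t then 1 else 0) = 0 := by
        apply Finset.sum_eq_zero
        intro j _
        have hj : ¬ ((Sᶜ.orderIsoOfFin hSc j : Fin N) ∈ S) :=
          Finset.mem_compl.mp (Sᶜ.orderIsoOfFin hSc j).2
        rw [hmemS] at hj
        rw [if_neg (by omega)]
      omega
    -- cnt of r
    have hcntr : ∀ t, k + cnt (fun j => p' (Sᶜ.orderIsoOfFin hSc j) - (k+1)) t
        = cnt p' (t + k + 1) := by
      intro t
      rw [cnt, cnt, sum_split_S S hS hSc (fun i => if p' i ≤ t + k + 1 then 1 else 0)]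
      have h1 : ∑ j : Fin k, (if p' (S.orderIsoOfFin hS j) ≤ t + k + 1 then 1 else 0) = k := by
        rw [Finset.sum_congr rfl (fun j _ => if_pos ?_)]
        · simp
        · have := (hmemS _).mp (S.orderIsoOfFin hS j).2
          omega
      rw [h1]
      have h2 : ∀ j : Fin (N-k),
          (if p' (Sᶜ.orderIsoOfFin hSc j) - (k+1) ≤ t then 1 else 0)
          = (if p' (Sᶜ.orderIsoOfFin hSc j) ≤ t + k + 1 then 1 else 0) := by
        intro j
        congr 1
        simp only [eq_iff_iff]
        omega
      rw [Finset.sum_congr rfl (fun j _ => h2 j)]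
    rw [Finset.mem_product]
    dsimp only
    constructor
    · rw [PF, Finset.mem_filter]
      constructor
      · rw [Fintype.mem_piFinset]
        intro j
        rw [Finset.mem_Icc]
        refine ⟨(hv _).1, ?_⟩
        exact (hmemS _).mp (S.orderIsoOfFin hS j).2
      · intro t ht
        rw [Finset.mem_range] at ht
        rw [hcntq t (by omega)]
        exact hepk.2 t (by omega)
    · rw [PF, Finset.mem_filter]
      constructor
      · rw [Fintype.mem_piFinset]
        intro j
        rw [Finset.mem_Icc]
        have hj : ¬ ((Sᶜ.orderIsoOfFin hSc j : Fin N) ∈ S) :=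
          Finset.mem_compl.mp (Sᶜ.orderIsoOfFin hSc j).2
        rw [hmemS] at hj
        have h1 := hne (Sᶜ.orderIsoOfFin hSc j : Fin N)
        have h2 := (hv (Sᶜ.orderIsoOfFin hSc j : Fin N)).2
        constructor <;> omega
      · intro t ht
        rw [Finset.mem_range] at ht
        have := hcntr t
        have h3 := hok (t + k + 1) (by rw [Finset.mem_range]; omega)
        omega
  · -- backward membership
    rintro ⟨q, r⟩ hqr
    rw [Finset.mem_coe] at hqr ⊢
    rw [Finset.mem_product] at hqr
    obtain ⟨hq, hr⟩ := hqr
    rw [PF, Finset.mem_filter] at hq hr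
    obtain ⟨hqpi, hqc⟩ := hq
    obtain ⟨hrpi, hrc⟩ := hr
    dsimp only at hqpi hqc hrpi hrc
    rw [Fintype.mem_piFinset] at hqpi hrpi
    have hqv : ∀ j, 1 ≤ q j ∧ q j ≤ k := by
      intro j; have := hqpi j; rwa [Finset.mem_Icc] at this
    have hrv : ∀ j, 1 ≤ r j ∧ r j ≤ N - k := by
      intro j; have := hrpi j; rwa [Finset.mem_Icc] at this
    dsimp only
    have hcntr0 : cnt r 0 = 0 := by
      rw [cnt]
      apply Finset.sum_eq_zero
      intro j _
      rw [if_neg (by have := (hrv j).1; omega)]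
    rw [Finset.mem_filter]
    refine ⟨?_, ?_, ?_⟩
    · rw [OK, Finset.mem_filter]
      constructor
      · rw [Fintype.mem_piFinset]
        intro i
        rw [Finset.mem_Icc, mrg]
        split
        · next h =>
          have := hqv ((S.orderIsoOfFin hS).symm ⟨i, h⟩)
          constructor <;> omega
        · next h =>
          have := hrv ((Sᶜ.orderIsoOfFin hSc).symm ⟨i, Finset.mem_compl.mpr h⟩)
          constructor <;> omega
      · intro t ht
        rw [Finset.mem_range] at ht
        by_cases htk : t ≤ k
        · rw [cnt_mrg_lo hS hSc q r htk]
          rcases Nat.eq_zero_or_pos t with h0 | h0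
          · omega
          · have := hqc t (by rw [Finset.mem_range]; omega)
            omega
        · rw [cnt_mrg_hi hS hSc q r (fun j => (hqv j).2) (by omega)]
          have := hrc (t - (k+1)) (by rw [Finset.mem_range]; omega)
          omega
    · rw [ep_eq_iff]
      constructor
      · rw [cnt_mrg_hi hS hSc q r (fun j => (hqv j).2) (by omega)]
        simp only [Nat.sub_self]
        omega
      · intro t ht
        rw [cnt_mrg_lo hS hSc q r (by omega)]
        rcases Nat.eq_zero_or_pos t with h0 | h0
        · omega
        · exact hqc t (by rw [Finset.mem_range]; omega)
    · ext i
      rw [Finset.mem_filter]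
      constructor
      · rintro ⟨-, hle⟩
        by_contra hiS
        rw [mrg, dif_neg hiS] at hle
        omega
      · intro hiS
        refine ⟨Finset.mem_univ i, ?_⟩
        rw [mrg, dif_pos hiS]
        exact (hqv _).2
  · -- left inverse
    intro p' hp'
    rw [Finset.mem_coe] at hp'
    rw [Finset.mem_filter] at hp'
    obtain ⟨hOK, hep, hSf⟩ := hp'
    rw [OK, Finset.mem_filter] at hOK
    have hmemS : ∀ i, i ∈ S ↔ p' i ≤ k := by
      intro i
      rw [← hSf, Finset.mem_filter]
      simp
    funext i
    show mrg k S hS hSc _ _ i = p' i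
    rw [mrg]
    split
    · next h =>
      dsimp only
      congr
      exact congrArg Subtype.val ((S.orderIsoOfFin hS).apply_symm_apply ⟨i, h⟩)
    · next h =>
      dsimp only
      have h2 : p' ((Sᶜ.orderIsoOfFin hSc) ((Sᶜ.orderIsoOfFin hSc).symm
          ⟨i, Finset.mem_compl.mpr h⟩) : Fin N) = p' i := by
        congr
        exact congrArg Subtype.val
          ((Sᶜ.orderIsoOfFin hSc).apply_symm_apply ⟨i, Finset.mem_compl.mpr h⟩)
      rw [h2]
      rw [hmemS] at h
      omega
  · -- right inverse
    rintro ⟨q, r⟩ hqr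
    rw [Finset.mem_coe] at hqr
    rw [Finset.mem_product] at hqr
    dsimp only
    have h1 : (fun j => mrg k S hS hSc q r (S.orderIsoOfFin hS j)) = q := by
      funext j
      rw [mrg_on_S]
    have h2 : (fun j => mrg k S hS hSc q r (Sᶜ.orderIsoOfFin hSc j) - (k+1)) = r := by
      funext j
      rw [mrg_on_Sc]
      omega
    rw [h1, h2]

end PFAux

namespace PFAux

lemma card_fiber {N k : ℕ} (hk : k ≤ N) :
    ((OK N).filter (fun p' => ep p' = k + 1)).card
      = N.choose k * ((PF k).card * (PF (N-k)).card) := by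
  classical
  rw [Finset.card_eq_sum_card_fiberwise
      (f := fun p' => Finset.univ.filter (fun i => p' i ≤ k))
      (t := Finset.powersetCard k Finset.univ) ?hmap]
  case hmap =>
    intro p' hp'
    rw [Finset.mem_coe] at hp' ⊢
    rw [Finset.mem_filter] at hp'
    obtain ⟨hOK, hep⟩ := hp'
    have hepk := (ep_eq_iff p' (k+1)).mp hep
    rw [Finset.mem_powersetCard_univ, ← cnt_eq_card]
    have h1 := hepk.1
    have h2 : k ≤ cnt p' k := by
      rcases Nat.eq_zero_or_pos k with hk0 | hk0
      · omega
      · exact hepk.2 k (by omega)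
    have h3 : cnt p' k ≤ cnt p' (k+1) := cnt_mono p' (by omega)
    omega
  have heach : ∀ S ∈ Finset.powersetCard k Finset.univ,
      (((OK N).filter (fun p' => ep p' = k + 1)).filter
          (fun p' => Finset.univ.filter (fun i => p' i ≤ k) = S)).card
        = (PF k).card * (PF (N-k)).card := by
    intro S hs
    rw [Finset.mem_powersetCard_univ] at hs
    rw [Finset.filter_filter, card_fiber_S hk S hs, Finset.card_product]
  rw [Finset.sum_congr rfl heach, Finset.sum_const, Finset.card_powersetCard]
  simp [mul_assoc]

end PFAux

namespace PFAux

lemma sum_ep (N : ℕ) (h : ℕ → ℚ) :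
    ∑ p' ∈ OK N, h (ep p')
      = ∑ k ∈ Finset.range (N+1),
          ((N.choose k * ((PF k).card * (PF (N-k)).card) : ℕ) : ℚ) * h (k+1) := by
  classical
  have hmap : ∀ p' ∈ OK N, ep p' ∈ Finset.Icc 1 (N+1) := by
    intro p' _
    rw [Finset.mem_Icc]
    exact ⟨ep_pos p', ep_le p'⟩
  rw [← Finset.sum_fiberwise_of_maps_to hmap (fun p' => h (ep p'))]
  have hIcc : Finset.Icc 1 (N+1) = (Finset.range (N+1)).map
      ⟨fun k => k + 1, fun a b h => by simpa using h⟩ := by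
    ext j
    simp only [Finset.mem_Icc, Finset.mem_map, Finset.mem_range, Function.Embedding.coeFn_mk]
    show 1 ≤ j ∧ j ≤ N + 1 ↔ ∃ a < N + 1, a + 1 = j
    constructor
    · intro hj; exact ⟨j - 1, by omega, by omega⟩
    · rintro ⟨a, ha, rfl⟩; omega
  rw [hIcc, Finset.sum_map]
  apply Finset.sum_congr rfl
  intro k hk
  rw [Finset.mem_range] at hk
  show ∑ p' ∈ (OK N).filter (fun p' => ep p' = k + 1), h (ep p')
    = ((N.choose k * ((PF k).card * (PF (N-k)).card) : ℕ) : ℚ) * h (k+1)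
  have hinner : ∑ p' ∈ (OK N).filter (fun p' => ep p' = k + 1), h (ep p')
      = ∑ p' ∈ (OK N).filter (fun p' => ep p' = k + 1), h (k+1) := by
    apply Finset.sum_congr rfl
    intro p' hp'
    rw [Finset.mem_filter] at hp'
    rw [hp'.2]
  rw [hinner, Finset.sum_const, card_fiber (by omega), nsmul_eq_mul]

lemma gauss (j : ℕ) : ∑ s ∈ Finset.Icc 1 j, (s : ℚ) = (j : ℚ) * ((j : ℚ) + 1) / 2 := by
  induction j with
  | zero => simp
  | succ j ih =>
    rw [Finset.sum_Icc_succ_top (by omega), ih]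
    push_cast
    ring

lemma card_Icc_one (j : ℕ) : (Finset.Icc 1 j).card = j := by
  rw [Nat.card_Icc]
  omega

lemma card_PF : ∀ n : ℕ, ((PF n).card : ℚ) = Fw n := by
  intro n
  induction n using Nat.strong_induction_on with
  | _ n ih =>
    match n with
    | 0 =>
      rw [PF, Finset.filter_true_of_mem
        (fun p _ => by intro t ht; rw [Finset.mem_range] at ht; omega)]
      norm_num [Fw]
    | (N+1) =>
      have h1 : ((PF (N+1)).card : ℚ) = ∑ p ∈ PF (N+1), (1 : ℚ) := by
        rw [Finset.sum_const, nsmul_eq_mul, mul_one]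
      rw [h1, stepA N (fun _ => (1:ℚ))]
      have h2 : ∀ p' : Fin N → ℕ, ∑ _s ∈ Finset.Icc 1 (ep p'), (1:ℚ) = ((ep p' : ℕ) : ℚ) := by
        intro p'
        rw [Finset.sum_const, nsmul_eq_mul, mul_one, card_Icc_one]
      rw [Finset.sum_congr rfl (fun p' _ => h2 p')]
      rw [sum_ep N (fun j => (j : ℚ))]
      have h3 : ∀ k ∈ Finset.range (N+1),
          ((N.choose k * ((PF k).card * (PF (N-k)).card) : ℕ) : ℚ) * ((k+1 : ℕ) : ℚ)
          = (N.choose k : ℚ) * ((1:ℚ) + (k:ℕ)) ^ k * Fw (N - k) := by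
        intro k hk
        rw [Finset.mem_range] at hk
        push_cast
        rw [ih k (by omega), ih (N-k) (by omega)]
        have hck : ((k:ℚ) + 1) * Fw k = ((1:ℚ) + (k:ℚ)) ^ k := by
          rw [Fw]
          match k with
          | 0 => norm_num
          | (k+1) =>
            push_cast
            rw [pow_succ]
            ring
        linear_combination (N.choose k : ℚ) * Fw (N-k) * hck
      rw [Finset.sum_congr rfl h3, Jq_one N 1, Fw, Nat.add_sub_cancel]
      push_cast
      ring

end PFAux

namespace PFAux

lemma succ_mul_Fw (k : ℕ) : ((k:ℚ) + 1) * Fw k = ((1:ℚ) + (k:ℚ)) ^ k := by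
  rw [Fw]
  match k with
  | 0 => norm_num
  | (k+1) =>
    push_cast
    rw [pow_succ]
    ring

lemma sum_p0 (N : ℕ) :
    ∑ p ∈ PF (N+1), ((p 0 : ℕ) : ℚ) = (Bq N 1 + ((1:ℚ) + 1 + N) ^ N) / 2 := by
  rw [stepA N (fun p => ((p 0 : ℕ) : ℚ))]
  have h2 : ∀ p' : Fin N → ℕ, ∑ s ∈ Finset.Icc 1 (ep p'),
        (((Fin.cons s p' : Fin (N+1) → ℕ) 0 : ℕ) : ℚ)
      = ((ep p' : ℕ) : ℚ) * (((ep p' : ℕ) : ℚ) + 1) / 2 := by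
    intro p'
    have hz : ∀ s ∈ Finset.Icc 1 (ep p'),
        (((Fin.cons s p' : Fin (N+1) → ℕ) 0 : ℕ) : ℚ) = (s : ℚ) := by
      intro s _
      rw [Fin.cons_zero]
    rw [Finset.sum_congr rfl hz, gauss]
  rw [Finset.sum_congr rfl (fun p' _ => h2 p')]
  rw [sum_ep N (fun j => (j : ℚ) * ((j : ℚ) + 1) / 2)]
  have h3 : ∀ k ∈ Finset.range (N+1),
      ((N.choose k * ((PF k).card * (PF (N-k)).card) : ℕ) : ℚ)
          * (((k+1 : ℕ) : ℚ) * (((k+1 : ℕ) : ℚ) + 1) / 2)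
      = ((N.choose k : ℚ) * ((1:ℚ) + (k:ℚ)) ^ (k+1) * Fw (N - k)
          + (N.choose k : ℚ) * ((1:ℚ) + (k:ℚ)) ^ k * Fw (N - k)) / 2 := by
    intro k hk
    rw [Finset.mem_range] at hk
    push_cast
    rw [card_PF k, card_PF (N-k)]
    have hck := succ_mul_Fw k
    linear_combination ((N.choose k : ℚ) * Fw (N-k) * ((k:ℚ) + 2) / 2) * hck
  rw [Finset.sum_congr rfl h3]
  rw [← Finset.sum_div]
  congr 1
  rw [Finset.sum_add_distrib]
  congr 1
  exact Jq_one N 1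

lemma sum_entries_le (n : ℕ) {p : Fin n → ℕ} (hp : p ∈ PF n) :
    ∑ j, p j ≤ n * (n + 1) / 2 := by
  rw [PF, Finset.mem_filter] at hp
  obtain ⟨hpi, hcnt⟩ := hp
  rw [Fintype.mem_piFinset] at hpi
  have hle : ∀ j, p j ≤ n := by
    intro j; have := hpi j; rw [Finset.mem_Icc] at this; exact this.2
  have hlayer : ∀ j, p j = ∑ t ∈ Finset.range n, (if t < p j then 1 else 0) := by
    intro j
    have hf : Finset.filter (fun t => t < p j) (Finset.range n) = Finset.range (p j) := by
      ext t
      simp only [Finset.mem_filter, Finset.mem_range]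
      have := hle j
      omega
    calc p j = (Finset.range (p j)).card := (Finset.card_range _).symm
      _ = (Finset.filter (fun t => t < p j) (Finset.range n)).card := by rw [hf]
      _ = ∑ t ∈ Finset.range n, (if t < p j then 1 else 0) := Finset.card_filter _ _
  rw [Finset.sum_congr rfl (fun j _ => hlayer j), Finset.sum_comm]
  have hbound : ∀ t ∈ Finset.range n, (∑ j, if t < p j then 1 else 0) ≤ n - t := by
    intro t ht
    rw [Finset.mem_range] at ht
    have hsplit : (∑ j, if t < p j then 1 else 0) + cnt p t = n := by
      rw [cnt, ← Finset.sum_add_distrib]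
      have : ∀ j : Fin n, ((if t < p j then 1 else 0) + (if p j ≤ t then 1 else 0)) = 1 := by
        intro j
        by_cases h : p j ≤ t
        · rw [if_pos h, if_neg (by omega)]
        · rw [if_neg h, if_pos (by omega)]
      rw [Finset.sum_congr rfl (fun j _ => this j)]
      simp
    have h1 := hcnt t (by rw [Finset.mem_range]; omega)
    omega
  have htot : ∑ t ∈ Finset.range n, (n - t) = n * (n+1) / 2 := by
    have hrev : ∑ t ∈ Finset.range n, (n - t) = ∑ t ∈ Finset.range n, (t + 1) := by
      rw [← Finset.sum_range_reflect]
      apply Finset.sum_congr rfl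
      intro t ht
      rw [Finset.mem_range] at ht
      omega
    have hs : ∑ t ∈ Finset.range (n+1), t = ∑ t ∈ Finset.range n, (t + 1) := by
      rw [Finset.sum_range_succ']
      simp
    have hg := Finset.sum_range_id_mul_two (n+1)
    have h2 : (∑ t ∈ Finset.range n, (t+1)) * 2 = n * (n+1) := by
      rw [← hs, hg]
      simp [Nat.mul_comm]
    rw [hrev]
    generalize hM : n * (n+1) = M at h2 ⊢
    omega
  calc ∑ t ∈ Finset.range n, (∑ j, if t < p j then 1 else 0)
      ≤ ∑ t ∈ Finset.range n, (n - t) := Finset.sum_le_sum hbound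
    _ = n * (n+1) / 2 := htot

end PFAux

namespace PFAux

lemma Wq_eq (N : ℕ) : ((N:ℚ)+2)^N * Wq (N+2)
    = ∑ j ∈ Finset.range (N+1),
        (((N+1).descFactorial (j+1) : ℕ) : ℚ) * ((N:ℚ)+2)^(N-j) := by
  rw [Wq]
  have hrange : (N+2) - 1 = N+1 := rfl
  rw [hrange]
  rw [← mul_assoc, Finset.mul_sum]
  rw [← Finset.sum_range_reflect
    (fun j => (((N+1).descFactorial (j+1) : ℕ) : ℚ) * ((N:ℚ)+2)^(N-j)) (N+1)]
  apply Finset.sum_congr rfl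
  intro k hk
  rw [Finset.mem_range] at hk
  have hk' : k ≤ N := by omega
  have e1 : N + 1 - 1 - k = N - k := by omega
  have e2 : N - (N - k) = k := by omega
  rw [e1, e2]
  have hP : ((N:ℚ)+2) ≠ 0 := by positivity
  have hPf : ((k.factorial : ℕ) : ℚ) ≠ 0 := Nat.cast_ne_zero.mpr (Nat.factorial_ne_zero _)
  have hfact : (((N+1).descFactorial (N-k+1) : ℕ) : ℚ) * ((k.factorial : ℕ) : ℚ)
      = (((N+1).factorial : ℕ) : ℚ) := by
    have h := Nat.factorial_mul_descFactorial (show N-k+1 ≤ N+1 by omega)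
    have e3 : N + 1 - (N - k + 1) = k := by omega
    rw [e3] at h
    have h' : (N+1).descFactorial (N-k+1) * k.factorial = (N+1).factorial := by
      rw [Nat.mul_comm]; exact h
    exact_mod_cast h'
  have hfs : (((N+2).factorial : ℕ) : ℚ) = ((N:ℚ)+2) * (((N+1).factorial : ℕ) : ℚ) := by
    rw [Nat.factorial_succ]
    push_cast
    ring
  have hcast : ((N+2 : ℕ) : ℚ) = (N:ℚ) + 2 := by push_cast; ring
  have hdf : (((N+1).descFactorial (N-k+1) : ℕ) : ℚ)
      = (((N+1).factorial : ℕ) : ℚ) / ((k.factorial : ℕ) : ℚ) :=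
    eq_div_of_mul_eq hPf hfact
  rw [hcast, hfs, pow_succ, hdf]
  field_simp

lemma Tcast (N : ℕ) :
    (((N+1) * (N+1+1) / 2 : ℕ) : ℚ) = ((N:ℚ)+1) * ((N:ℚ)+2) / 2 := by
  have hdvd : 2 ∣ (N+1) * (N+1+1) := (Nat.even_mul_succ_self (N+1)).two_dvd
  have h2 : ((N+1) * (N+1+1) / 2 : ℕ) * 2 = (N+1) * (N+1+1) := Nat.div_mul_cancel hdvd
  have h3 : (((N+1) * (N+1+1) / 2 : ℕ) : ℚ) * 2 = ((N:ℚ)+1) * ((N:ℚ)+2) := by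
    exact_mod_cast h2
  linarith

end PFAux



/-- The expectation of the area statistic over a uniformly random parking function of
length `n` equals `-n/2 + W_{n+1}/2`. -/
theorem expectation_area_parking (n : ℕ) :
    (∑ p ∈ pfFinset 1 n, ((n * (n + 1) / 2 - ∑ i, p i : ℕ) : ℚ)) /
        ((n : ℚ) + 1) ^ (n - 1) =
      -(n : ℚ) / 2 + Wq (n + 1) / 2 := by
  rw [PFAux.pfFinset_eq_PF]
  match n with
  | 0 =>
    have h0 : ∑ p ∈ PFAux.PF 0, ((0 * (0 + 1) / 2 - ∑ i, p i : ℕ) : ℚ) = 0 := by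
      apply Finset.sum_eq_zero
      intro p _
      norm_num
    rw [h0]
    simp [Wq]
  | (N+1) =>
    have hP : ((N:ℚ)+2) ≠ 0 := by positivity
    have hPn : ((N:ℚ)+2)^N ≠ 0 := pow_ne_zero _ hP
    have hnum : ∑ p ∈ PFAux.PF (N+1), (((N+1) * (N+1+1) / 2 - ∑ i, p i : ℕ) : ℚ)
        = ((N:ℚ)+2)^N * (((N:ℚ)+1) * ((N:ℚ)+2) / 2)
          - ((N:ℚ)+1) * ((PFAux.Bq N 1 + ((1:ℚ)+1+(N:ℚ))^N) / 2) := by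
      have hterm : ∀ p ∈ PFAux.PF (N+1),
          (((N+1) * (N+1+1) / 2 - ∑ i, p i : ℕ) : ℚ)
          = (((N+1) * (N+1+1) / 2 : ℕ) : ℚ) - ∑ i, ((p i : ℕ) : ℚ) := by
        intro p hp
        rw [Nat.cast_sub (PFAux.sum_entries_le (N+1) hp)]
        push_cast
        ring
      rw [Finset.sum_congr rfl hterm, Finset.sum_sub_distrib, Finset.sum_const, nsmul_eq_mul]
      have hcard : (((PFAux.PF (N+1)).card : ℕ) : ℚ) = ((N:ℚ)+2)^N := by
        rw [PFAux.card_PF (N+1), PFAux.Fw, Nat.add_sub_cancel]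
        push_cast
        ring
      rw [hcard, PFAux.Tcast N, PFAux.sum_entries N, PFAux.sum_p0 N]
    rw [hnum]
    have hden : (((N+1 : ℕ) : ℚ) + 1) ^ (N+1-1) = ((N:ℚ)+2)^N := by
      rw [Nat.add_sub_cancel]
      push_cast
      ring
    rw [hden, div_eq_iff hPn]
    have hBq := PFAux.Bq_eq N 1
    have hB : PFAux.Bq N 1
        = ∑ j ∈ Finset.range (N+1), (N.descFactorial j : ℚ) * ((j:ℚ)+1) * ((N:ℚ)+2)^(N-j) := by
      rw [hBq]
      apply Finset.sum_congr rfl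
      intro j _
      push_cast
      ring_nf
    have hR : ∑ j ∈ Finset.range (N+1),
          (((N+1).descFactorial (j+1) : ℕ) : ℚ) * ((N:ℚ)+2)^(N-j)
        = ((N:ℚ)+1) * ∑ j ∈ Finset.range (N+1),
            (N.descFactorial j : ℚ) * ((N:ℚ)+2)^(N-j) := by
      rw [Finset.mul_sum]
      apply Finset.sum_congr rfl
      intro j _
      rw [Nat.succ_descFactorial_succ]
      push_cast
      ring
    have htel : (∑ j ∈ Finset.range (N+1), (N.descFactorial j : ℚ) * ((j:ℚ)+1) * ((N:ℚ)+2)^(N-j))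
        + (∑ j ∈ Finset.range (N+1), (N.descFactorial j : ℚ) * ((N:ℚ)+2)^(N-j))
        = ((N:ℚ)+2)^(N+1) := by
      rw [← PFAux.telescope N, ← Finset.sum_add_distrib]
      apply Finset.sum_congr rfl
      intro j _
      ring
    have hW2 : Wq (N+1+1) = (((N:ℚ)+1) * ∑ j ∈ Finset.range (N+1),
        (N.descFactorial j : ℚ) * ((N:ℚ)+2)^(N-j)) / ((N:ℚ)+2)^N := by
      rw [eq_div_iff hPn]
      rw [show (N+1+1) = (N+2) from rfl]
      have := PFAux.Wq_eq N
      rw [mul_comm] at this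
      rw [this, hR]
    rw [hB, hW2]
    have h11 : ((1:ℚ)+1+(N:ℚ))^N = ((N:ℚ)+2)^N := by ring_nf
    rw [h11]
    push_cast
    linear_combination (-(((N:ℚ)+1)/2)) * htel
      + (-(((N:ℚ)+1) * (∑ j ∈ Finset.range (N+1),
          (N.descFactorial j : ℚ) * ((N:ℚ)+2)^(N-j)) / 2)) * (mul_inv_cancel₀ hPn)
end
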